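/- An operator in 𝒯(u) is of type α ∈ ℂ* (the Riemann sphere) if and only if its adjoint is of type conj(α)⁻¹, using the conventions 0⁻¹ = ∞ and ∞⁻¹ = 0 (and conj(∞) = ∞). -/

import Mathlib

/-! # Setting: truncated Toeplitz operators on model spaces

We work on the circle `𝕋`, realized as `AddCircle (2π)`, with its normalized Haar
(Lebesgue) measure `m`.  `L2` is the Lebesgue space `L²(𝕋, m)`, `H2 ⊆ L2` is the Hardy
space (the closed span of the nonnegative Fourier monomials), and for an inner function
`u` the model space is `Ku u = H² ⊖ uH²`, with orthogonal projection `Pu u : L² → Ku u`.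

For a symbol `Φ`, `IsTTO u Φ A` says that the bounded operator `A` on `Ku u` is the
truncated Toeplitz operator with symbol `Φ`, i.e. `A f = P_u (Φ f)` for every bounded
`f ∈ K_u`; thus `A ∈ 𝒯(u)` iff `∃ Φ ∈ L², IsTTO u Φ A`. -/

open MeasureTheory Complex
open scoped Real ENNReal ComplexConjugate

noncomputable section

namespace TTO

instance fact_two_pi_pos : Fact ((0:ℝ) < 2 * Real.pi) := ⟨by positivity⟩

/-- The circle, realized additively as `ℝ / 2πℤ`. -/
abbrev Circ : Type := AddCircle (2 * Real.pi)

/-- Normalized Lebesgue measure on the circle. -/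
abbrev m : Measure Circ := @AddCircle.haarAddCircle (2 * Real.pi) _

/-- The Lebesgue space `L²` of the circle. -/
abbrev L2 : Type := Lp ℂ 2 m

open scoped Classical in
/-- The element of `L²` determined by a function (junk value `0` if the function is
not square-integrable). -/
def toLp2 (f : Circ → ℂ) : L2 := if h : MemLp f 2 m then h.toLp f else 0

/-- The coordinate function `z` on the circle. -/
def coord : Circ → ℂ := fun w => fourier 1 w

/-- The Hardy space `H²`: the closed linear span in `L²` of the monomials `zⁿ`, `n ≥ 0`. -/
def H2 : Submodule ℂ L2 :=
  (Submodule.span ℂ (Set.range fun n : ℕ => (fourierLp 2 (n : ℤ) : L2))).topologicalClosure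

instance : CompleteSpace H2 :=
  (Submodule.isClosed_topologicalClosure _).completeSpace_coe

/-- The (closed) subspace `uH²` of `L²`. -/
def uH2 (u : Circ → ℂ) : Submodule ℂ L2 :=
  (Submodule.span ℂ {g : L2 | ∃ f : L2, f ∈ H2 ∧
    (g : Circ → ℂ) =ᵐ[m] fun w => u w * (f : Circ → ℂ) w}).topologicalClosure

/-- The model space `K_u = H² ⊖ uH²`. -/
def Ku (u : Circ → ℂ) : Submodule ℂ L2 := H2 ⊓ (uH2 u)ᗮ

instance completeSpace_Ku (u : Circ → ℂ) : CompleteSpace (Ku u) := by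
  have h : IsClosed ((Ku u : Set L2)) := by
    have h1 : IsClosed ((H2 : Set L2)) := Submodule.isClosed_topologicalClosure _
    have h2 : IsClosed (((uH2 u)ᗮ : Set L2)) := Submodule.isClosed_orthogonal _
    have h3 : (Ku u : Set L2) = (H2 : Set L2) ∩ ((uH2 u)ᗮ : Set L2) := by
      simp [Ku]
    rw [h3]; exact h1.inter h2
  exact h.completeSpace_coe

/-- The orthogonal projection `P_u : L² → K_u`. -/
def Pu (u : Circ → ℂ) : L2 →L[ℂ] Ku u := (Ku u).orthogonalProjectionOnto

/-- `u` is an inner function: (essentially bounded) measurable, of unit modulus a.e.,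
and belonging to `H²`. -/
def IsInner (u : Circ → ℂ) : Prop :=
  AEStronglyMeasurable u m ∧ (∀ᵐ w ∂m, ‖u w‖ = 1) ∧ toLp2 u ∈ H2

/-- `u` is nonconstant (as an element of `L²`). -/
def Nonconst (u : Circ → ℂ) : Prop := ¬ ∃ c : ℂ, u =ᵐ[m] fun _ => c

/-- `IsTTO u Φ A` : the bounded operator `A` on the model space `K_u` is the truncated
Toeplitz operator with symbol `Φ`, i.e. `A f = P_u (Φ · f)` for every bounded `f ∈ K_u`.
(`A ∈ 𝒯(u)` with symbol `Φ`.) -/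
def IsTTO (u Φ : Circ → ℂ) (A : Ku u →L[ℂ] Ku u) : Prop :=
  ∀ f : Ku u, MemLp ((f : L2) : Circ → ℂ) ⊤ m →
    A f = Pu u (toLp2 fun w => Φ w * ((f : L2) : Circ → ℂ) w)

/-- `A ∈ 𝒯(u)`: `A` is a (bounded) truncated Toeplitz operator, i.e. it has some
symbol in `L²`. -/
def MemTTOs (u : Circ → ℂ) (A : Ku u →L[ℂ] Ku u) : Prop :=
  ∃ Φ : Circ → ℂ, MemLp Φ 2 m ∧ IsTTO u Φ A

/-- Equality of the two (densely defined) truncated Toeplitz operators with symbols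
`Φ` and `Ψ`: they agree on all bounded elements of `K_u`. -/
def TTOeq (u Φ Ψ : Circ → ℂ) : Prop :=
  ∀ f : Ku u, MemLp ((f : L2) : Circ → ℂ) ⊤ m →
    Pu u (toLp2 fun w => Φ w * ((f : L2) : Circ → ℂ) w) =
      Pu u (toLp2 fun w => Ψ w * ((f : L2) : Circ → ℂ) w)

/-- Evaluation at the origin: for `f ∈ H²`, the value `f(0)` of the holomorphic
extension is `∫ f dm` (the zeroth Fourier coefficient). -/
def ev0 (f : Circ → ℂ) : ℂ := ∫ w, f w ∂m

/-- The reproducing kernel `K₀ = 1 − conj(u(0))·u` of `K_u` at `0`, as a function. -/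
def K0fun (u : Circ → ℂ) : Circ → ℂ := fun w => 1 - conj (ev0 u) * u w

/-- `K₀` as an element of `K_u`. -/
def K0 (u : Circ → ℂ) : Ku u := Pu u (toLp2 (K0fun u))

/-- The conjugate kernel `CK₀ = (u − u(0))/z`, as a function. -/
def CK0fun (u : Circ → ℂ) : Circ → ℂ := fun w => (u w - ev0 u) / coord w

/-- `CK₀` as an element of `K_u`. -/
def CK0 (u : Circ → ℂ) : Ku u := Pu u (toLp2 (CK0fun u))

/-- The conjugation `C f = u · conj(z f)`, as a map into `L²`. -/
def CfunL2 (u f : Circ → ℂ) : L2 := toLp2 fun w => u w * conj (coord w * f w)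

/-- The conjugation `C` on the model space `K_u`.  (Since `C` maps `K_u` onto itself,
post-composing with `P_u` realizes it as a map `K_u → K_u`.) -/
def Cop (u : Circ → ℂ) (f : Ku u) : Ku u := Pu u (CfunL2 u ((f : L2) : Circ → ℂ))

lemma smul_fun_eq_mul (g f : Circ → ℂ) : g • f = fun w => g w * f w := rfl

lemma memℒp_mul_of_top {g : Circ → ℂ} (hg : MemLp g ⊤ m) (f : L2) :
    MemLp (fun w => g w * (f : Circ → ℂ) w) 2 m := by
  have h : MemLp (g • ((f : L2) : Circ → ℂ)) 2 m := (Lp.memLp f).smul hg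
  rwa [smul_fun_eq_mul] at h

lemma memℒp_top_coord : MemLp coord ⊤ m := by
  refine memLp_top_of_bound ((map_continuous (fourier 1)).aestronglyMeasurable) 1 ?_
  exact Filter.Eventually.of_forall fun w => le_of_eq (Circle.norm_coe _)

/-- Multiplication by an essentially bounded function, as a bounded operator on `L²`. -/
def mulCLM (g : Circ → ℂ) (hg : MemLp g ⊤ m) : L2 →L[ℂ] L2 :=
  LinearMap.mkContinuous
    { toFun := fun f => (memℒp_mul_of_top hg f).toLp _
      map_add' := by
        intro f₁ f₂
        apply Lp.ext
        filter_upwards [MemLp.coeFn_toLp (memℒp_mul_of_top hg (f₁ + f₂)),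
          Lp.coeFn_add ((memℒp_mul_of_top hg f₁).toLp _) ((memℒp_mul_of_top hg f₂).toLp _),
          MemLp.coeFn_toLp (memℒp_mul_of_top hg f₁),
          MemLp.coeFn_toLp (memℒp_mul_of_top hg f₂),
          Lp.coeFn_add f₁ f₂] with w e0 e1 e2 e3 e4
        simp only [e0, e1, Pi.add_apply, e2, e3, e4, mul_add]
      map_smul' := by
        intro c f
        apply Lp.ext
        filter_upwards [MemLp.coeFn_toLp (memℒp_mul_of_top hg (c • f)),
          Lp.coeFn_smul c ((memℒp_mul_of_top hg f).toLp _),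
          MemLp.coeFn_toLp (memℒp_mul_of_top hg f),
          Lp.coeFn_smul c f] with w e0 e1 e2 e3
        simp only [e0, RingHom.id_apply, e1, Pi.smul_apply, e2, e3, smul_eq_mul]
        ring }
    (eLpNorm g ⊤ m).toReal
    (by
      intro f
      have hb : eLpNorm (fun w => g w * ((f : L2) : Circ → ℂ) w) 2 m ≤
          eLpNorm g ⊤ m * eLpNorm ((f : L2) : Circ → ℂ) 2 m := by
        have h := eLpNorm_smul_le_eLpNorm_top_mul_eLpNorm 2 (Lp.aestronglyMeasurable f) g
        rwa [smul_fun_eq_mul] at h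
      dsimp only [LinearMap.coe_mk, AddHom.coe_mk]
      rw [Lp.norm_toLp, Lp.norm_def, ← ENNReal.toReal_mul]
      exact ENNReal.toReal_mono
        (ENNReal.mul_ne_top hg.eLpNorm_ne_top (Lp.memLp f).eLpNorm_ne_top) hb)

/-- The compressed shift `S = A_z` on the model space `K_u`. -/
def Sop (u : Circ → ℂ) : Ku u →L[ℂ] Ku u :=
  (Pu u).comp ((mulCLM coord memℒp_top_coord).comp (Ku u).subtypeL)

/-- The rank one operator `f ⊗ g : h ↦ ⟨h, g⟩ f` (inner product linear in the first slot,
as in the paper). -/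
def rankOne {E : Type*} [NormedAddCommGroup E] [InnerProductSpace ℂ E] (f g : E) :
    E →L[ℂ] E :=
  (innerSL ℂ g).smulRight f

/-- The modified (generalized) shift
`S_α = S + (α/(1 − α·conj(u(0)))) K₀ ⊗ CK₀` on `K_u`. -/
def Salpha (u : Circ → ℂ) (α : ℂ) : Ku u →L[ℂ] Ku u :=
  Sop u + (α / (1 - α * conj (ev0 u))) • rankOne (K0 u) (CK0 u)

/-- The symbol `φ + α·conj(S(Cφ)) + c` associated with `φ ∈ K_u`, `α, c ∈ ℂ`. -/
def typeSymbol (u : Circ → ℂ) (α : ℂ) (φ : Ku u) (c : ℂ) : Circ → ℂ :=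
  fun w => ((φ : L2) : Circ → ℂ) w +
    α * conj (((Sop u (Cop u φ) : L2) : Circ → ℂ) w) + c

/-- `A ∈ 𝒯(u)` is of type `α ∈ ℂ`: it has a symbol of the form `φ + α·conj(S(Cφ)) + c`
with `φ ∈ K_u`, `c ∈ ℂ`. -/
def IsTypeC (u : Circ → ℂ) (α : ℂ) (A : Ku u →L[ℂ] Ku u) : Prop :=
  ∃ (φ : Ku u) (c : ℂ), IsTTO u (typeSymbol u α φ c) A

/-- `A ∈ 𝒯(u)` is of type `∞`: it has an antiholomorphic symbol `conj ψ`, `ψ ∈ H²`. -/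
def IsTypeInf (u : Circ → ℂ) (A : Ku u →L[ℂ] Ku u) : Prop :=
  ∃ ψ : Circ → ℂ, MemLp ψ 2 m ∧ toLp2 ψ ∈ H2 ∧ IsTTO u (fun w => conj (ψ w)) A

/-- Type over the Riemann sphere `ℂ* = ℂ ∪ {∞}`, encoded as `Option ℂ`
(`none` being the point at infinity). -/
def IsTypeS (u : Circ → ℂ) (A : Ku u →L[ℂ] Ku u) : Option ℂ → Prop
  | none => IsTypeInf u A
  | some α => IsTypeC u α A

/-- The self-map `α ↦ conj(α)⁻¹` of the Riemann sphere `ℂ* = ℂ ∪ {∞}` (encoded as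
`Option ℂ`, `none` being `∞`), with the conventions `0⁻¹ = ∞`, `∞⁻¹ = 0`,
`conj ∞ = ∞`. -/
def sphereInvConj : Option ℂ → Option ℂ
  | none => some 0
  | some α => if α = 0 then none else some (conj α)⁻¹

/-- The holomorphic (Cauchy) extension of a boundary function to the disc:
`f(z) = ∫ f(w)/(1 − z·conj w) dm(w)`; for `f ∈ H²` and `|z| < 1` this is the value at
`z` of the holomorphic extension of `f`. -/
def cauchyExt (f : Circ → ℂ) (z : ℂ) : ℂ := ∫ w, f w / (1 - z * conj (coord w)) ∂m

/-- A Stolz (nontangential approach) region at the boundary point `ζ` with aperture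
parameter `M`. -/
def stolz (ζ : ℂ) (M : ℝ) : Set ℂ := {z : ℂ | ‖z‖ < 1 ∧ ‖ζ - z‖ < M * (1 - ‖z‖)}

/-- `f` has nontangential limit `L` at the boundary point `ζ`. -/
def NTlim (f : ℂ → ℂ) (ζ L : ℂ) : Prop :=
  ∀ M : ℝ, 1 < M → Filter.Tendsto f (nhdsWithin ζ (stolz ζ M)) (nhds L)

/-- `u` has an angular derivative in the sense of Caratheodory at the boundary point
`ζ`, with nontangential limits `uζ` (of unit modulus) for `u` and `u'ζ` for `u′`. -/
def HasADC (u : Circ → ℂ) (ζ uζ u'ζ : ℂ) : Prop :=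
  ‖ζ‖ = 1 ∧ ‖uζ‖ = 1 ∧ NTlim (cauchyExt u) ζ uζ ∧ NTlim (deriv (cauchyExt u)) ζ u'ζ

end TTO


open MeasureTheory Complex
open scoped Real ENNReal ComplexConjugate

noncomputable section
namespace TTO

local notation "⟪" x ", " y "⟫" => @inner ℂ _ _ x y

/-- The Fourier monomials as elements of `L2`. -/
abbrev efn (n : ℤ) : L2 := fourierLp 2 n

lemma coe_efn (n : ℤ) : (efn n : Circ → ℂ) =ᵐ[m] fun w => fourier n w :=
  coeFn_fourierLp 2 n

abbrev B : HilbertBasis ℤ ℂ L2 := @fourierBasis (2*Real.pi) _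

lemma B_apply (i : ℤ) : B i = efn i := congrFun coe_fourierBasis i

lemma orthonormal_efn : Orthonormal ℂ efn := by
  have h := B.orthonormal
  have : ⇑B = efn := funext B_apply
  rwa [this] at h

lemma inner_efn_efn (m' n : ℤ) : ⟪efn m', efn n⟫ = if m' = n then 1 else 0 := by
  have := orthonormal_iff_ite.mp orthonormal_efn m' n
  simpa using this

/-- Fourier coefficient of an `L2` element. -/
def coef (f : L2) (n : ℤ) : ℂ := ⟪efn n, f⟫

lemma coef_B (f : L2) (n : ℤ) : (B.repr f) n = coef f n := by
  rw [B.repr_apply_apply]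
  show ⟪B n, f⟫ = coef f n
  rw [B_apply]; rfl

lemma inner_L2_eq_integral (f g : L2) :
    ⟪f, g⟫ = ∫ w, conj ((f : Circ → ℂ) w) * (g : Circ → ℂ) w ∂m := by
  rw [L2.inner_def]
  exact integral_congr_ae (Filter.Eventually.of_forall fun w => (RCLike.inner_apply _ _).trans (mul_comm _ _))

lemma coef_eq_integral (f : L2) (n : ℤ) :
    coef f n = ∫ w, fourier (-n) w * (f : Circ → ℂ) w ∂m := by
  rw [coef, inner_L2_eq_integral]
  refine integral_congr_ae ?_
  filter_upwards [coe_efn n] with w hw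
  rw [hw, ← fourier_neg]

lemma eq_zero_of_coef_eq_zero (f : L2) (h : ∀ n, coef f n = 0) : f = 0 := by
  have hr : B.repr f = 0 := by
    ext n
    rw [coef_B f n, h n]
    simp
  have := congrArg B.repr.symm hr
  simpa using this

lemma isClosed_H2 : IsClosed (H2 : Set L2) := Submodule.isClosed_topologicalClosure _

lemma efn_mem_H2 (n : ℕ) : efn n ∈ H2 :=
  Submodule.le_topologicalClosure _ (Submodule.subset_span ⟨n, rfl⟩)

/-- Orthogonality helper. -/
lemma inner_eq_zero_of_gen {S : Set L2} {x : L2} (h : ∀ s ∈ S, ⟪s, x⟫ = 0) :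
    ∀ q ∈ (Submodule.span ℂ S).topologicalClosure, ⟪q, x⟫ = 0 := by
  intro q hq
  let K : Submodule ℂ L2 :=
    { carrier := {y : L2 | ⟪y, x⟫ = 0}
      add_mem' := fun {a b} ha hb => by
        simp only [Set.mem_setOf_eq] at *
        rw [inner_add_left, ha, hb, add_zero]
      zero_mem' := by simp
      smul_mem' := fun c a ha => by
        simp only [Set.mem_setOf_eq] at *
        rw [inner_smul_left, ha, mul_zero] }
  have hKc : IsClosed (K : Set L2) := by
    have : (K : Set L2) = (fun y => ⟪y, x⟫) ⁻¹' {0} := rfl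
    rw [this]
    exact IsClosed.preimage (continuous_inner.comp (Continuous.prodMk continuous_id continuous_const)) isClosed_singleton
  exact Submodule.topologicalClosure_minimal _ (Submodule.span_le.mpr (fun s hs => h s hs)) hKc hq

lemma coef_eq_zero_of_mem_H2 {f : L2} (hf : f ∈ H2) {n : ℤ} (hn : n < 0) :
    coef f n = 0 := by
  have h0 : ∀ s ∈ (Set.range fun k : ℕ => (fourierLp 2 (k : ℤ) : L2)), ⟪s, efn n⟫ = 0 := by
    rintro s ⟨k, rfl⟩
    rw [inner_efn_efn]
    simp only [ite_eq_right_iff]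
    intro hk; omega
  have := inner_eq_zero_of_gen h0 f hf
  rw [coef, ← inner_conj_symm, this, map_zero]

lemma mem_H2_of_coef (f : L2) (h : ∀ n : ℤ, n < 0 → coef f n = 0) : f ∈ H2 := by
  have hs : HasSum (fun i => ((B.repr f) i : ℂ) • B i) f := B.hasSum_repr f
  have hmem : ∀ i : ℤ, ((B.repr f) i : ℂ) • B i ∈ H2 := by
    intro i
    rcases lt_or_ge i 0 with hi | hi
    · rw [coef_B, h i hi, zero_smul]; exact zero_mem _
    · refine Submodule.smul_mem _ _ ?_
      rw [B_apply]
      have : i = ((i.toNat : ℕ) : ℤ) := by omega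
      rw [this]; exact efn_mem_H2 _
  refine IsClosed.mem_of_tendsto isClosed_H2 hs ?_
  exact Filter.Eventually.of_forall fun s => Submodule.sum_mem _ fun i _ => hmem i

lemma mem_H2_iff_coef (f : L2) : f ∈ H2 ↔ ∀ n : ℤ, n < 0 → coef f n = 0 :=
  ⟨fun hf _ hn => coef_eq_zero_of_mem_H2 hf hn, mem_H2_of_coef f⟩

end TTO


open MeasureTheory Complex
open scoped Real ENNReal ComplexConjugate

noncomputable section
namespace TTO

local notation "⟪" x ", " y "⟫" => @inner ℂ _ _ x y

lemma memℒp2_of_top {f : Circ → ℂ} (hf : MemLp f ⊤ m) : MemLp f 2 m :=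
  hf.mono_exponent le_top

lemma memℒp2_mul_top {f g : Circ → ℂ} (hf : MemLp f 2 m) (hg : MemLp g ⊤ m) :
    MemLp (fun w => f w * g w) 2 m := by
  have h : MemLp (f • g) 2 m := hg.smul hf
  rwa [smul_fun_eq_mul] at h

lemma memℒp2_top_mul {f g : Circ → ℂ} (hf : MemLp f ⊤ m) (hg : MemLp g 2 m) :
    MemLp (fun w => f w * g w) 2 m := by
  have := memℒp2_mul_top hg hf
  simpa [mul_comm] using this

lemma toLp2_coeFn {f : Circ → ℂ} (hf : MemLp f 2 m) : (toLp2 f : Circ → ℂ) =ᵐ[m] f := by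
  rw [toLp2, dif_pos hf]; exact hf.coeFn_toLp

lemma toLp2_congr {f g : Circ → ℂ} (hf : MemLp f 2 m) (h : f =ᵐ[m] g) :
    toLp2 f = toLp2 g := by
  have hg : MemLp g 2 m := hf.ae_eq h
  rw [toLp2, toLp2, dif_pos hf, dif_pos hg]
  exact hf.toLp_congr hg h

lemma toLp2_coe (f : L2) : toLp2 (f : Circ → ℂ) = f := by
  rw [toLp2, dif_pos (Lp.memLp f)]
  apply Lp.ext
  exact MemLp.coeFn_toLp _

lemma toLp2_zero : toLp2 (fun _ : Circ => (0:ℂ)) = 0 := by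
  rw [toLp2, dif_pos (memLp_const (0:ℂ) : MemLp (fun _ : Circ => (0:ℂ)) 2 m)]
  apply Lp.ext
  exact (MemLp.coeFn_toLp _).trans (Lp.coeFn_zero ℂ 2 m).symm

lemma toLp2_add {f g : Circ → ℂ} (hf : MemLp f 2 m) (hg : MemLp g 2 m) :
    toLp2 (fun w => f w + g w) = toLp2 f + toLp2 g := by
  have hfg : MemLp (fun w => f w + g w) 2 m := hf.add hg
  apply Lp.ext
  filter_upwards [toLp2_coeFn hfg, toLp2_coeFn hf, toLp2_coeFn hg,
    Lp.coeFn_add (toLp2 f) (toLp2 g)] with w h1 h2 h3 h4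
  rw [h1, h4]; simp [h2, h3]

lemma toLp2_smul {f : Circ → ℂ} (c : ℂ) (hf : MemLp f 2 m) :
    toLp2 (fun w => c * f w) = c • toLp2 f := by
  have hcf : MemLp (fun w => c * f w) 2 m := by
    exact hf.const_smul c
  apply Lp.ext
  filter_upwards [toLp2_coeFn hcf, toLp2_coeFn hf, Lp.coeFn_smul c (toLp2 f)] with w h1 h2 h3
  rw [h1, h3]; simp [h2]

lemma inner_toLp2_left {f : Circ → ℂ} (hf : MemLp f 2 m) (y : L2) :
    ⟪toLp2 f, y⟫ = ∫ w, conj (f w) * (y : Circ → ℂ) w ∂m := by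
  rw [inner_L2_eq_integral]
  refine integral_congr_ae ?_
  filter_upwards [toLp2_coeFn hf] with w h1
  rw [h1]

lemma inner_toLp2_right {f : Circ → ℂ} (hf : MemLp f 2 m) (y : L2) :
    ⟪y, toLp2 f⟫ = ∫ w, conj ((y : Circ → ℂ) w) * f w ∂m := by
  rw [inner_L2_eq_integral]
  refine integral_congr_ae ?_
  filter_upwards [toLp2_coeFn hf] with w h1
  rw [h1]

lemma coef_toLp2 {f : Circ → ℂ} (hf : MemLp f 2 m) (n : ℤ) :
    coef (toLp2 f) n = ∫ w, fourier (-n) w * f w ∂m := by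
  rw [coef_eq_integral]
  refine integral_congr_ae ?_
  filter_upwards [toLp2_coeFn hf] with w h1
  rw [h1]

lemma coeFn_mulCLM {g : Circ → ℂ} (hg : MemLp g ⊤ m) (f : L2) :
    (mulCLM g hg f : Circ → ℂ) =ᵐ[m] fun w => g w * (f : Circ → ℂ) w :=
  (memℒp_mul_of_top hg f).coeFn_toLp

lemma mulCLM_eq_toLp2 {g : Circ → ℂ} (hg : MemLp g ⊤ m) (f : L2) :
    mulCLM g hg f = toLp2 (fun w => g w * (f : Circ → ℂ) w) := by
  apply Lp.ext
  exact (coeFn_mulCLM hg f).trans (toLp2_coeFn (memℒp2_top_mul hg (Lp.memLp f))).symm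

lemma norm_coord (w : Circ) : ‖coord w‖ = 1 := by
  simpa [coord, fourier_apply] using Circle.norm_coe _

lemma coord_mul_conj (w : Circ) : coord w * conj (coord w) = 1 := by
  rw [Complex.mul_conj]
  rw [show normSq (coord w) = ‖coord w‖ ^ 2 from Complex.normSq_eq_norm_sq _]
  rw [norm_coord]
  norm_num

lemma conj_mul_coord (w : Circ) : conj (coord w) * coord w = 1 := by
  rw [mul_comm]; exact coord_mul_conj w

lemma fourier_eq_coord_pow (k : ℕ) (w : Circ) : fourier (k : ℤ) w = (coord w) ^ k := by
  induction k with
  | zero => simp [fourier_zero]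
  | succ n ih =>
    rw [show (((n+1:ℕ)):ℤ) = (1:ℤ) + (n:ℤ) by push_cast; ring, fourier_add, ih, pow_succ,
      mul_comm]
    rfl


end TTO


open MeasureTheory Complex
open scoped Real ENNReal ComplexConjugate

noncomputable section
namespace TTO

local notation "⟪" x ", " y "⟫" => @inner ℂ _ _ x y

variable {u : Circ → ℂ}

lemma IsInner.memTop (hu : IsInner u) : MemLp u ⊤ m := by
  refine memLp_top_of_bound hu.1 1 ?_
  filter_upwards [hu.2.1] with w hw
  rw [hw]

lemma coef_mulCLM_efn {g : Circ → ℂ} (hg : MemLp g ⊤ m) (k : ℕ) (n : ℤ) :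
    coef (mulCLM g hg (efn (k : ℤ))) n = coef (toLp2 g) (n - k) := by
  rw [mulCLM_eq_toLp2, coef_toLp2 (memℒp2_top_mul hg (Lp.memLp _)),
    coef_toLp2 (memℒp2_of_top hg)]
  refine integral_congr_ae ?_
  filter_upwards [coe_efn (k : ℤ)] with w hw
  rw [hw]
  have : fourier (-(n - k)) w = fourier (-n) w * fourier (k : ℤ) w := by
    rw [← fourier_add]; congr 1; ring
  rw [this]; ring

lemma mulCLM_mem_H2 {g : Circ → ℂ} (hg : MemLp g ⊤ m) (hgH2 : toLp2 g ∈ H2)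
    {f : L2} (hf : f ∈ H2) : mulCLM g hg f ∈ H2 := by
  let K : Submodule ℂ L2 := Submodule.comap (mulCLM g hg : L2 →ₗ[ℂ] L2) H2
  have hKc : IsClosed (K : Set L2) :=
    IsClosed.preimage (mulCLM g hg).continuous isClosed_H2
  have hspan : (Submodule.span ℂ (Set.range fun n : ℕ => (fourierLp 2 (n : ℤ) : L2))) ≤ K := by
    rw [Submodule.span_le]
    rintro s ⟨k, rfl⟩
    show mulCLM g hg (efn (k : ℤ)) ∈ H2
    refine mem_H2_of_coef _ fun n hn => ?_
    rw [coef_mulCLM_efn hg k n]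
    exact coef_eq_zero_of_mem_H2 hgH2 (by omega)
  exact Submodule.topologicalClosure_minimal _ hspan hKc hf

lemma mem_uH2_of_ae {q : L2} (f : L2) (hf : f ∈ H2)
    (h : (q : Circ → ℂ) =ᵐ[m] fun w => u w * (f : Circ → ℂ) w) : q ∈ uH2 u :=
  Submodule.le_topologicalClosure _ (Submodule.subset_span ⟨f, hf, h⟩)

lemma mulCLM_mem_uH2 (hu : IsInner u) {f : L2} (hf : f ∈ H2) :
    mulCLM u hu.memTop f ∈ uH2 u :=
  mem_uH2_of_ae f hf (coeFn_mulCLM hu.memTop f)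

lemma toLp2_u_mem_uH2 (hu : IsInner u) : toLp2 u ∈ uH2 u := by
  refine mem_uH2_of_ae (efn 0) (efn_mem_H2 0) ?_
  filter_upwards [toLp2_coeFn (memℒp2_of_top hu.memTop), coe_efn 0] with w h1 h2
  rw [h1, h2]
  simp [fourier_zero]

lemma Ku_le_H2 : Ku u ≤ H2 := inf_le_left

lemma inner_uH2_Ku {x q : L2} (hx : x ∈ Ku u) (hq : q ∈ uH2 u) : ⟪q, x⟫ = 0 :=
  (Submodule.mem_orthogonal _ _).mp (inf_le_right (a := H2) hx) q hq

lemma inner_Ku_uH2 {x q : L2} (hx : x ∈ Ku u) (hq : q ∈ uH2 u) : ⟪x, q⟫ = 0 := by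
  rw [← inner_conj_symm, inner_uH2_Ku hx hq, map_zero]

lemma uH2_le_Ku_orth {q : L2} (hq : q ∈ uH2 u) : q ∈ (Ku u)ᗮ := by
  rw [Submodule.mem_orthogonal]
  intro y hy
  exact inner_Ku_uH2 hy hq

lemma Pu_eq_self {v : L2} (hv : v ∈ Ku u) : ((Pu u v : Ku u) : L2) = v :=
  congrArg _ (Submodule.orthogonalProjectionOnto_mem_subspace_eq_self (K := Ku u) ⟨v, hv⟩)

lemma Pu_eq_zero {v : L2} (hv : v ∈ (Ku u)ᗮ) : Pu u v = 0 :=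
  Submodule.orthogonalProjectionOnto_apply_of_mem_orthogonal hv

lemma Pu_uH2_eq_zero {v : L2} (hv : v ∈ uH2 u) : Pu u v = 0 :=
  Pu_eq_zero (uH2_le_Ku_orth hv)

lemma inner_Pu_right (f : Ku u) (y : L2) :
    ⟪((f : L2)), ((Pu u y : Ku u) : L2)⟫ = ⟪((f : L2)), y⟫ := by
  have h := (Ku u).starProjection_inner_eq_zero y (f : L2) f.2
  rw [Submodule.starProjection_apply] at h
  have h2 : ⟪(f : L2), y - ((Pu u y : Ku u) : L2)⟫ = 0 := by
    rw [← inner_conj_symm]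
    show conj ⟪y - (((Ku u).orthogonalProjectionOnto y : Ku u) : L2), (f : L2)⟫ = 0
    rw [h, map_zero]
  rw [inner_sub_right] at h2
  linear_combination -h2

lemma inner_Pu_left (y : L2) (g : Ku u) :
    ⟪((Pu u y : Ku u) : L2), (g : L2)⟫ = ⟪y, (g : L2)⟫ := by
  have := (Ku u).starProjection_inner_eq_zero y (g : L2) g.2
  rw [Submodule.starProjection_apply] at this
  rw [inner_sub_left] at this
  show ⟪(((Ku u).orthogonalProjectionOnto y : Ku u) : L2), (g : L2)⟫ = ⟪y, (g : L2)⟫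
  linear_combination -this

end TTO


open MeasureTheory Complex
open scoped Real ENNReal ComplexConjugate

noncomputable section
namespace TTO

local notation "⟪" x ", " y "⟫" => @inner ℂ _ _ x y

lemma hasSum_conj {f : ℕ → ℂ} {a : ℂ} (h : HasSum f a) :
    HasSum (fun n => conj (f n)) (conj a) :=
  h.map (starRingEnd ℂ).toAddMonoidHom continuous_star

lemma norm_efn (n : ℤ) : ‖efn n‖ = 1 := orthonormal_efn.1 n

lemma norm_toLp2_le {f : Circ → ℂ} {C : ℝ} (hC : 0 ≤ C)
    (hmeas : AEStronglyMeasurable f m) (hb : ∀ᵐ w ∂m, ‖f w‖ ≤ C) :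
    ‖toLp2 f‖ ≤ C := by
  have hf : MemLp f 2 m := memℒp2_of_top (memLp_top_of_bound hmeas C hb)
  rw [toLp2, dif_pos hf, Lp.norm_toLp]
  have h1 := eLpNorm_le_of_ae_bound (p := 2) (μ := m) hb
  have h2 : (m Set.univ : ℝ≥0∞) ^ (2 : ℝ≥0∞).toReal⁻¹ * ENNReal.ofReal C = ENNReal.ofReal C := by
    simp [measure_univ]
  rw [h2] at h1
  calc (eLpNorm f 2 m).toReal ≤ (ENNReal.ofReal C).toReal :=
        ENNReal.toReal_mono ENNReal.ofReal_ne_top h1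
    _ = C := ENNReal.toReal_ofReal hC

lemma norm_coord' (w : Circ) : ‖coord w‖ = 1 := by
  have := norm_coord w
  simpa using this

lemma continuous_coord : Continuous coord := by
  have : coord = fun w => ((fourier (T := 2*Real.pi) 1) w : ℂ) := rfl
  rw [this]
  exact (fourier 1).continuous

lemma toLp2_coord_pow (k : ℕ) : toLp2 (fun w => coord w ^ k) = efn (k : ℤ) := by
  have h1 : MemLp (fun w => coord w ^ k) 2 m := by
    refine memℒp2_of_top (memLp_top_of_bound ?_ 1 ?_)
    · exact (continuous_coord.pow k).aestronglyMeasurable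
    · refine Filter.Eventually.of_forall fun w => ?_
      simp [norm_pow, norm_coord]
  rw [← toLp2_coe (efn (k:ℤ))]
  refine toLp2_congr h1 ?_
  filter_upwards [coe_efn (k : ℤ)] with w hw
  rw [hw, fourier_eq_coord_pow]

section lam
variable {lam : ℂ}

/-- The Cauchy kernel function `1/(1 - λ̄ z)`. -/
def gfun (lam : ℂ) : Circ → ℂ := fun w => (1 - conj lam * coord w)⁻¹

lemma gfun_ne (hlam : ‖lam‖ < 1) (w : Circ) : 1 - conj lam * coord w ≠ 0 := by
  intro h
  have h1 : ‖conj lam * coord w‖ = ‖lam‖ := by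
    rw [norm_mul, norm_coord, mul_one, Complex.norm_conj]
  have : (1:ℂ) = conj lam * coord w := by linear_combination h
  rw [← this] at h1
  simp at h1
  rw [h1] at hlam
  exact lt_irrefl _ hlam

lemma gfun_bound (hlam : ‖lam‖ < 1) (w : Circ) : ‖gfun lam w‖ ≤ (1 - ‖lam‖)⁻¹ := by
  rw [gfun, norm_inv]
  have h1 : 1 - ‖lam‖ ≤ ‖(1 : ℂ) - conj lam * coord w‖ := by
    have := norm_sub_norm_le (1 : ℂ) (conj lam * coord w)
    rw [norm_one] at this
    have h2 : ‖conj lam * coord w‖ = ‖lam‖ := by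
      rw [norm_mul]
      have : ‖coord w‖ = 1 := norm_coord w
      rw [this, mul_one, RCLike.norm_conj]
    rw [h2] at this
    exact this
  exact inv_anti₀ (by linarith) h1

lemma gfun_memTop (hlam : ‖lam‖ < 1) : MemLp (gfun lam) ⊤ m := by
  refine memLp_top_of_bound ?_ _ (Filter.Eventually.of_forall (gfun_bound hlam))
  exact (Continuous.inv₀ (continuous_const.sub (continuous_const.mul continuous_coord))
    (gfun_ne hlam)).aestronglyMeasurable

/-- The geometric-series element `G = Σ (λ̄ z)^k` of `H²`. -/
def Gel (lam : ℂ) : L2 := toLp2 (gfun lam)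

lemma Gel_partial (hlam : ‖lam‖ < 1) (N : ℕ) :
    Gel lam = (∑ k ∈ Finset.range N, (conj lam) ^ k • efn (k : ℤ))
      + toLp2 (fun w => (conj lam * coord w) ^ N * gfun lam w) := by
  induction N with
  | zero =>
    simp only [Finset.range_zero, Finset.sum_empty, zero_add]
    refine toLp2_congr (memℒp2_of_top (gfun_memTop hlam)) ?_
    refine Filter.Eventually.of_forall fun w => ?_
    show gfun lam w = (conj lam * coord w) ^ 0 * gfun lam w
    rw [pow_zero, one_mul]
  | succ N ih =>
    rw [ih, Finset.sum_range_succ]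
    have hsplit : toLp2 (fun w => (conj lam * coord w) ^ N * gfun lam w)
        = toLp2 (fun w => (conj lam)^N * coord w ^ N)
          + toLp2 (fun w => (conj lam * coord w) ^ (N+1) * gfun lam w) := by
      have hmemN : ∀ M : ℕ, MemLp (fun w => (conj lam * coord w) ^ M * gfun lam w) 2 m := by
        intro M
        refine memℒp2_of_top (memLp_top_of_bound ?_ ((1-‖lam‖)⁻¹) ?_)
        · exact (((continuous_const.mul continuous_coord).pow M).mul
            (Continuous.inv₀ (continuous_const.sub (continuous_const.mul continuous_coord)) (gfun_ne hlam))).aestronglyMeasurable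
        · refine Filter.Eventually.of_forall fun w => ?_
          rw [norm_mul, norm_pow, norm_mul, RCLike.norm_conj, norm_coord', mul_one]
          calc ‖lam‖ ^ M * ‖gfun lam w‖ ≤ 1 * ‖gfun lam w‖ := by
                refine mul_le_mul_of_nonneg_right ?_ (norm_nonneg _)
                exact pow_le_one₀ (norm_nonneg _) hlam.le
            _ = ‖gfun lam w‖ := one_mul _
            _ ≤ (1-‖lam‖)⁻¹ := gfun_bound hlam w
      have hmono : MemLp (fun w => (conj lam)^N * coord w ^ N) 2 m := by
        refine memℒp2_of_top (memLp_top_of_bound ?_ (‖lam‖^N) ?_)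
        · exact (continuous_const.mul (continuous_coord.pow N)).aestronglyMeasurable
        · refine Filter.Eventually.of_forall fun w => ?_
          rw [norm_mul, norm_pow, norm_pow, RCLike.norm_conj, norm_coord', one_pow, mul_one]
      rw [← toLp2_add hmono (hmemN (N+1))]
      refine toLp2_congr (hmemN N) ?_
      refine Filter.Eventually.of_forall fun w => ?_
      have hg : gfun lam w = 1 + conj lam * coord w * gfun lam w := by
        rw [gfun]
        field_simp [gfun_ne hlam w]
        ring
      calc (conj lam * coord w) ^ N * gfun lam w
          = (conj lam * coord w) ^ N * (1 + conj lam * coord w * gfun lam w) := by rw [← hg]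
        _ = (conj lam)^N * coord w ^ N + (conj lam * coord w)^(N+1) * gfun lam w := by
            rw [mul_pow]; ring
    have hpow : MemLp (fun w => coord w ^ N) 2 m :=
      memℒp2_of_top (memLp_top_of_bound
        ((continuous_coord.pow N).aestronglyMeasurable) 1
        (Filter.Eventually.of_forall fun w => by
          simp [norm_pow, norm_coord]))
    have hmono2 : toLp2 (fun w => (conj lam)^N * coord w ^ N) = (conj lam)^N • efn (N:ℤ) := by
      rw [toLp2_smul _ hpow, toLp2_coord_pow]
    rw [hsplit, hmono2]
    abel

lemma hasSum_Gel (hlam : ‖lam‖ < 1) : HasSum (fun k : ℕ => (conj lam) ^ k • efn (k : ℤ)) (Gel lam) := by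
  have hsummable : Summable (fun k : ℕ => (conj lam) ^ k • efn (k : ℤ)) := by
    refine Summable.of_norm_bounded (g := fun k => ‖lam‖ ^ k) (summable_geometric_of_lt_one
      (norm_nonneg _) hlam) fun k => ?_
    rw [norm_smul, norm_pow, RCLike.norm_conj, norm_efn, mul_one]
  have hs := hsummable.hasSum
  have htend := hs.tendsto_sum_nat
  have htend2 : Filter.Tendsto (fun N => ∑ k ∈ Finset.range N, (conj lam) ^ k • efn (k : ℤ))
      Filter.atTop (nhds (Gel lam)) := by
    have key : ∀ N : ℕ, ‖Gel lam - ∑ k ∈ Finset.range N, (conj lam) ^ k • efn (k : ℤ)‖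
        ≤ ‖lam‖ ^ N * (1-‖lam‖)⁻¹ := by
      intro N
      have := Gel_partial (lam := lam) hlam N
      have heq : Gel lam - ∑ k ∈ Finset.range N, (conj lam) ^ k • efn (k : ℤ)
          = toLp2 (fun w => (conj lam * coord w) ^ N * gfun lam w) := by
        rw [this]; abel
      rw [heq]
      refine norm_toLp2_le (mul_nonneg (pow_nonneg (norm_nonneg _) N)
        (inv_nonneg.mpr (by linarith))) ?_ ?_
      · exact (((continuous_const.mul continuous_coord).pow N).mul
          (Continuous.inv₀ (continuous_const.sub (continuous_const.mul continuous_coord)) (gfun_ne hlam))).aestronglyMeasurable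
      · refine Filter.Eventually.of_forall fun w => ?_
        rw [norm_mul, norm_pow, norm_mul, RCLike.norm_conj, norm_coord', mul_one]
        exact mul_le_mul_of_nonneg_left (gfun_bound hlam w) (by positivity)
    have h0 : Filter.Tendsto (fun N : ℕ => ‖lam‖ ^ N * (1-‖lam‖)⁻¹) Filter.atTop (nhds 0) := by
      rw [show (0:ℝ) = 0 * (1-‖lam‖)⁻¹ by ring]
      exact (tendsto_pow_atTop_nhds_zero_of_lt_one (norm_nonneg _) hlam).mul tendsto_const_nhds
    have : Filter.Tendsto (fun N => Gel lam - ∑ k ∈ Finset.range N, (conj lam) ^ k • efn (k : ℤ))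
        Filter.atTop (nhds 0) := by
      refine tendsto_zero_iff_norm_tendsto_zero.mpr ?_
      exact squeeze_zero (fun N => norm_nonneg _) key h0
    have := Filter.Tendsto.const_sub (Gel lam) this
    simpa using this
  have := tendsto_nhds_unique htend htend2
  rwa [this] at hs

end lam
end TTO


open MeasureTheory Complex
open scoped Real ENNReal ComplexConjugate

noncomputable section
namespace TTO

local notation "⟪" x ", " y "⟫" => @inner ℂ _ _ x y

variable {u : Circ → ℂ} {lam : ℂ}

lemma coef_norm_le (f : L2) (n : ℤ) : ‖coef f n‖ ≤ ‖f‖ := by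
  have := norm_inner_le_norm (𝕜 := ℂ) (efn n) f
  rwa [norm_efn, one_mul] at this

lemma hasSum_inner_Gel (hlam : ‖lam‖ < 1) (y : L2) :
    HasSum (fun k : ℕ => lam ^ k * ⟪efn (k : ℤ), y⟫) ⟪Gel lam, y⟫ := by
  have h1 : HasSum (fun k : ℕ => ⟪y, (conj lam) ^ k • efn (k : ℤ)⟫) ⟪y, Gel lam⟫ :=
    HasSum.mapL (innerSL ℂ y) (hasSum_Gel hlam)
  have h2 := hasSum_conj h1
  have h3 : (fun k : ℕ => conj ⟪y, (conj lam) ^ k • efn (k : ℤ)⟫)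
      = fun k : ℕ => lam ^ k * ⟪efn (k : ℤ), y⟫ := by
    funext k
    rw [inner_smul_right, map_mul, map_pow, RCLike.conj_conj, inner_conj_symm]
  rwa [h3, inner_conj_symm] at h2

lemma inner_Gel_efn (hlam : ‖lam‖ < 1) (n : ℕ) : ⟪Gel lam, efn (n : ℤ)⟫ = lam ^ n := by
  have h1 := hasSum_inner_Gel hlam (efn (n : ℤ))
  have h2 : (fun k : ℕ => lam ^ k * ⟪efn (k : ℤ), efn (n : ℤ)⟫)
      = fun k : ℕ => if k = n then lam ^ n else 0 := by
    funext k
    rw [inner_efn_efn]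
    by_cases h : k = n <;> simp [h]
  rw [h2] at h1
  exact h1.unique (hasSum_ite_eq n (lam ^ n))

/-- The boundary value `u(λ)` of the holomorphic extension. -/
def ulam (u : Circ → ℂ) (lam : ℂ) : ℂ := ∑' j : ℕ, lam ^ j * coef (toLp2 u) j

lemma summable_ulam (hlam : ‖lam‖ < 1) :
    Summable (fun j : ℕ => lam ^ j * coef (toLp2 u) j) := by
  refine Summable.of_norm_bounded (g := fun j => ‖toLp2 u‖ * ‖lam‖ ^ j)
    ((summable_geometric_of_lt_one (norm_nonneg _) hlam).mul_left _) fun j => ?_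
  show ‖lam ^ j * coef (toLp2 u) (j:ℤ)‖ ≤ ‖toLp2 u‖ * ‖lam‖ ^ j
  rw [norm_mul, norm_pow, mul_comm (‖toLp2 u‖) (‖lam‖ ^ j)]
  exact mul_le_mul_of_nonneg_left (coef_norm_le _ _) (by positivity)

lemma hasSum_ulam (hlam : ‖lam‖ < 1) :
    HasSum (fun j : ℕ => lam ^ j * coef (toLp2 u) j) (ulam u lam) :=
  (summable_ulam hlam).hasSum

section withu
variable (hu : IsInner u)

lemma inner_Gel_Mu_efn (hlam : ‖lam‖ < 1) (n : ℕ) :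
    ⟪Gel lam, mulCLM u hu.memTop (efn (n : ℤ))⟫ = lam ^ n * ulam u lam := by
  have h1 := hasSum_inner_Gel hlam (mulCLM u hu.memTop (efn (n : ℤ)))
  have h2 : (fun k : ℕ => lam ^ k * ⟪efn (k : ℤ), mulCLM u hu.memTop (efn (n : ℤ))⟫)
      = fun k : ℕ => lam ^ k * coef (toLp2 u) ((k : ℤ) - n) := by
    funext k
    rw [show ⟪efn (k:ℤ), mulCLM u hu.memTop (efn (n : ℤ))⟫
      = coef (mulCLM u hu.memTop (efn (n : ℤ))) k from rfl, coef_mulCLM_efn]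
  rw [h2] at h1
  have h3 : HasSum (fun k : ℕ => lam ^ k * coef (toLp2 u) ((k : ℤ) - n))
      (lam ^ n * ulam u lam) := by
    have h4 : HasSum (fun j : ℕ => lam ^ (n + j) * coef (toLp2 u) j)
        (lam ^ n * ulam u lam) := by
      have := (hasSum_ulam (u := u) hlam).mul_left (lam ^ n)
      refine (congrArg (fun f => HasSum f (lam ^ n * ulam u lam)) ?_).mpr this
      funext j; rw [pow_add]; ring
    have hinj : Function.Injective (fun j : ℕ => n + j) := fun a b h => Nat.add_left_cancel h
    have hrange : ∀ k : ℕ, k ∉ Set.range (fun j : ℕ => n + j) →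
        lam ^ k * coef (toLp2 u) ((k : ℤ) - n) = 0 := by
      intro k hk
      have hkn : k < n := by
        by_contra h
        exact hk ⟨k - n, by show n + (k - n) = k; omega⟩
      rw [coef_eq_zero_of_mem_H2 hu.2.2 (by omega), mul_zero]
    refine (Function.Injective.hasSum_iff hinj hrange).mp ?_
    have : ((fun k : ℕ => lam ^ k * coef (toLp2 u) ((k : ℤ) - n)) ∘ fun j : ℕ => n + j)
        = fun j : ℕ => lam ^ (n + j) * coef (toLp2 u) j := by
      funext j
      simp only [Function.comp_apply]
      congr 2
      omega
    rw [this]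
    exact h4
  exact h1.unique h3

lemma inner_Mu_Mu (x y : L2) :
    ⟪mulCLM u hu.memTop x, mulCLM u hu.memTop y⟫ = ⟪x, y⟫ := by
  rw [inner_L2_eq_integral, inner_L2_eq_integral]
  refine integral_congr_ae ?_
  filter_upwards [coeFn_mulCLM hu.memTop x, coeFn_mulCLM hu.memTop y, hu.2.1] with w h1 h2 h3
  rw [h1, h2]
  have : conj (u w) * u w = 1 := by
    rw [← Complex.normSq_eq_conj_mul_self]
    norm_cast
    rw [show normSq (u w) = ‖u w‖^2 from Complex.normSq_eq_norm_sq _]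
    rw [show ‖u w‖ = ‖u w‖ from rfl, h3]; norm_num
  calc conj (u w * (x:Circ → ℂ) w) * (u w * (y : Circ → ℂ) w)
      = (conj (u w) * u w) * (conj ((x:Circ → ℂ) w) * (y : Circ → ℂ) w) := by
        rw [map_mul]; ring
    _ = conj ((x:Circ → ℂ) w) * (y : Circ → ℂ) w := by rw [this, one_mul]

/-- The reproducing kernel at `λ` as an element of `L²`. -/
def kel (u : Circ → ℂ) (hu : IsInner u) (lam : ℂ) : L2 :=
  Gel lam - conj (ulam u lam) • mulCLM u hu.memTop (Gel lam)

lemma Gel_mem_H2 (hlam : ‖lam‖ < 1) : Gel lam ∈ H2 := by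
  refine mem_H2_of_coef _ fun n hn => ?_
  have h1 := hasSum_inner_Gel hlam (efn n)
  have h2 : (fun k : ℕ => lam ^ k * ⟪efn (k : ℤ), efn n⟫) = fun _ : ℕ => (0:ℂ) := by
    funext k
    rw [inner_efn_efn, if_neg (by omega), mul_zero]
  rw [h2] at h1
  have := h1.unique hasSum_zero
  rw [coef, ← inner_conj_symm, this, map_zero]

lemma kel_mem_Ku (hlam : ‖lam‖ < 1) : kel u hu lam ∈ Ku u := by
  constructor
  · refine Submodule.sub_mem _ (Gel_mem_H2 hlam) (Submodule.smul_mem _ _ ?_)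
    exact mulCLM_mem_H2 hu.memTop hu.2.2 (Gel_mem_H2 hlam)
  · refine (Submodule.mem_orthogonal _ _).mpr ?_
    intro q hq
    -- reduce to generators of uH2
    refine inner_eq_zero_of_gen ?_ q hq
    rintro s ⟨f, hf, hs⟩
    have hsMu : s = mulCLM u hu.memTop f := by
      apply Lp.ext
      exact hs.trans (coeFn_mulCLM hu.memTop f).symm
    rw [hsMu]
    -- reduce to monomials
    have key : ∀ k : ℕ, ⟪mulCLM u hu.memTop (efn (k:ℤ)), kel u hu lam⟫ = 0 := by
      intro k
      have e1 : ⟪mulCLM u hu.memTop (efn (k:ℤ)), Gel lam⟫ = conj (lam ^ k * ulam u lam) := by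
        rw [← inner_Gel_Mu_efn hu hlam k, inner_conj_symm]
      have e2 : ⟪efn (k:ℤ), Gel lam⟫ = conj (lam ^ k) := by
        rw [← inner_Gel_efn hlam k, inner_conj_symm]
      rw [kel, inner_sub_right, inner_smul_right, inner_Mu_Mu hu, e1, e2, map_mul]
      ring
    -- the map f ↦ ⟪Mu f, kel⟫ vanishes on H2
    have hmub : MemLp (fun w => conj (u w)) ⊤ m := by
      refine memLp_top_of_bound (RCLike.continuous_conj.comp_aestronglyMeasurable hu.1) 1 ?_
      filter_upwards [hu.2.1] with w hw
      rw [RCLike.norm_conj, hw]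
    have hswap : ∀ x : L2, ⟪mulCLM u hu.memTop x, kel u hu lam⟫
        = ⟪x, mulCLM (fun w => conj (u w)) hmub (kel u hu lam)⟫ := by
      intro x
      rw [inner_L2_eq_integral, inner_L2_eq_integral]
      refine integral_congr_ae ?_
      filter_upwards [coeFn_mulCLM hu.memTop x, coeFn_mulCLM hmub (kel u hu lam)] with w h1 h2
      rw [h1, h2, map_mul]
      ring
    have hgen : ∀ s ∈ (Set.range fun n : ℕ => (fourierLp 2 (n : ℤ) : L2)),
        ⟪s, mulCLM (fun w => conj (u w)) hmub (kel u hu lam)⟫ = 0 := by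
      rintro s ⟨k, rfl⟩
      rw [← hswap]
      exact key k
    rw [hswap]
    exact inner_eq_zero_of_gen hgen f hf

lemma kel_memTop (hlam : ‖lam‖ < 1) :
    MemLp ((kel u hu lam : L2) : Circ → ℂ) ⊤ m := by
  refine memLp_top_of_bound (Lp.aestronglyMeasurable _)
    ((1 - ‖lam‖)⁻¹ * (1 + ‖ulam u lam‖)) ?_
  have h1 := Lp.coeFn_sub (Gel lam) (conj (ulam u lam) • mulCLM u hu.memTop (Gel lam))
  have h2 := Lp.coeFn_smul (conj (ulam u lam)) (mulCLM u hu.memTop (Gel lam))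
  have h3 := coeFn_mulCLM hu.memTop (Gel lam)
  have h4 : ((Gel lam : L2) : Circ → ℂ) =ᵐ[m] gfun lam :=
    toLp2_coeFn (memℒp2_of_top (gfun_memTop hlam))
  filter_upwards [h1, h2, h3, h4, hu.2.1] with w e1 e2 e3 e4 e5
  rw [show kel u hu lam = Gel lam - conj (ulam u lam) • mulCLM u hu.memTop (Gel lam) from rfl]
  rw [e1]
  simp only [Pi.sub_apply]
  rw [e2]
  simp only [Pi.smul_apply, smul_eq_mul]
  rw [e3]
  calc ‖(Gel lam : Circ → ℂ) w - conj (ulam u lam) * (u w * (Gel lam : Circ → ℂ) w)‖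
      ≤ ‖(Gel lam : Circ → ℂ) w‖ + ‖conj (ulam u lam) * (u w * (Gel lam : Circ → ℂ) w)‖ :=
        norm_sub_le _ _
    _ ≤ (1-‖lam‖)⁻¹ + ‖ulam u lam‖ * (1 * (1-‖lam‖)⁻¹) := by
        refine add_le_add ?_ ?_
        · rw [e4]; exact gfun_bound hlam w
        · rw [norm_mul, norm_mul, RCLike.norm_conj, e5]
          refine mul_le_mul_of_nonneg_left ?_ (norm_nonneg _)
          refine mul_le_mul_of_nonneg_left ?_ (by norm_num)
          rw [e4]; exact gfun_bound hlam w
    _ = (1 - ‖lam‖)⁻¹ * (1 + ‖ulam u lam‖) := by ring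

lemma inner_Mu_Gel_of_Ku {X : L2} (hX : X ∈ Ku u) (hlam : ‖lam‖ < 1) :
    ⟪mulCLM u hu.memTop (Gel lam), X⟫ = 0 := by
  have h1 : HasSum (fun k : ℕ => ⟪X, mulCLM u hu.memTop ((conj lam) ^ k • efn (k:ℤ))⟫)
      ⟪X, mulCLM u hu.memTop (Gel lam)⟫ :=
    HasSum.mapL ((innerSL ℂ X).comp (mulCLM u hu.memTop)) (hasSum_Gel hlam)
  have h2 : (fun k : ℕ => ⟪X, mulCLM u hu.memTop ((conj lam) ^ k • efn (k:ℤ))⟫)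
      = fun _ : ℕ => (0:ℂ) := by
    funext k
    rw [(mulCLM u hu.memTop).map_smul, inner_smul_right]
    have : ⟪X, mulCLM u hu.memTop (efn (k:ℤ))⟫ = 0 := by
      rw [← inner_conj_symm, inner_uH2_Ku hX (mulCLM_mem_uH2 hu (efn_mem_H2 k)), map_zero]
    rw [this, mul_zero]
  rw [h2] at h1
  have := h1.unique hasSum_zero
  rw [← inner_conj_symm, this, map_zero]


/-- Partial sums of monomial series as `toLp2`. -/
lemma toLp2_finsum (a : ℕ → ℂ) (N : ℕ) :
    (∑ k ∈ Finset.range N, a k • efn (k : ℤ))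
      = toLp2 (fun w => ∑ k ∈ Finset.range N, a k * coord w ^ k) := by
  have hmem : ∀ M : ℕ, MemLp (fun w => ∑ k ∈ Finset.range M, a k * coord w ^ k) 2 m := by
    intro M
    refine memℒp2_of_top (memLp_top_of_bound ?_ (∑ k ∈ Finset.range M, ‖a k‖) ?_)
    · exact (continuous_finset_sum _ fun k _ =>
        continuous_const.mul (continuous_coord.pow k)).aestronglyMeasurable
    · refine Filter.Eventually.of_forall fun w => ?_
      refine (norm_sum_le _ _).trans (Finset.sum_le_sum fun k _ => ?_)
      rw [norm_mul, norm_pow, norm_coord', one_pow, mul_one]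
  induction N with
  | zero =>
    simp only [Finset.range_zero, Finset.sum_empty]
    rw [← toLp2_zero]
  | succ M ih =>
    rw [Finset.sum_range_succ, ih]
    have hm2 : MemLp (fun w => a M * coord w ^ M) 2 m := by
      refine memℒp2_of_top (memLp_top_of_bound ?_ (‖a M‖) ?_)
      · exact (continuous_const.mul (continuous_coord.pow M)).aestronglyMeasurable
      · refine Filter.Eventually.of_forall fun w => ?_
        rw [norm_mul, norm_pow, norm_coord', one_pow, mul_one]
    have hsm : a M • efn (M : ℤ) = toLp2 (fun w => a M * coord w ^ M) := by
      rw [← toLp2_coord_pow M, ← toLp2_smul]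
      exact memℒp2_of_top (memLp_top_of_bound
        ((continuous_coord.pow M).aestronglyMeasurable) 1
        (Filter.Eventually.of_forall fun w => by rw [norm_pow, norm_coord', one_pow]))
    rw [hsm, ← toLp2_add (hmem M) hm2]
    refine toLp2_congr ((hmem M).add hm2) ?_
    refine Filter.Eventually.of_forall fun w => ?_
    show (∑ k ∈ Finset.range M, a k * coord w ^ k) + a M * coord w ^ M
      = ∑ k ∈ Finset.range (M+1), a k * coord w ^ k
    rw [Finset.sum_range_succ]

/-- If the power series with coefficients `c` sums to `0` at every `(1/2)·z`, then all
coefficients vanish. -/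
lemma coeff_zero_of_series_zero (c : ℕ → ℂ) (C : ℝ)
    (hbound : ∀ k, ‖c k‖ ≤ C * (2:ℝ)⁻¹ ^ k)
    (hzero : ∀ w : Circ, HasSum (fun k : ℕ => c k * coord w ^ k) 0) :
    ∀ N, c N = 0 := by
  have hC : 0 ≤ C := by
    have h0 := (norm_nonneg (c 0)).trans (hbound 0); simpa using h0
  have hsummable : Summable (fun k => c k • efn (k : ℤ)) := by
    refine Summable.of_norm_bounded (g := fun k => C * (2:ℝ)⁻¹ ^ k)
      ((summable_geometric_of_lt_one (by norm_num) (by norm_num)).mul_left _) fun k => ?_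
    rw [norm_smul, norm_efn, mul_one]
    exact hbound k
  have hS : HasSum (fun k => c k • efn (k:ℤ)) (∑' k : ℕ, c k • efn (k:ℤ)) := hsummable.hasSum
  set S := ∑' k : ℕ, c k • efn (k:ℤ) with hSdef
  have hS0 : S = 0 := by
    have key : ∀ N : ℕ, ‖∑ k ∈ Finset.range N, c k • efn (k:ℤ)‖ ≤ C * (2:ℝ)⁻¹ ^ N * 2 := by
      intro N
      rw [toLp2_finsum]
      refine norm_toLp2_le (by positivity) ?_ ?_
      · exact (continuous_finset_sum _ fun k _ =>
          continuous_const.mul (continuous_coord.pow k)).aestronglyMeasurable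
      · refine Filter.Eventually.of_forall fun w => ?_
        have hsw := hzero w
        have hsum := hsw.summable
        have htail := Summable.sum_add_tsum_nat_add (f := fun k => c k * coord w ^ k) N hsum
        rw [hsw.tsum_eq] at htail
        have heq : (∑ k ∈ Finset.range N, c k * coord w ^ k)
            = -∑' (i:ℕ), c (i+N) * coord w ^ (i+N) := by
          linear_combination htail
        rw [heq, norm_neg]
        have hterm : ∀ i : ℕ, ‖c (i+N) * coord w ^ (i+N)‖ ≤ (C * (2:ℝ)⁻¹ ^ N) * (2:ℝ)⁻¹ ^ i := by
          intro i
          rw [norm_mul, norm_pow, norm_coord', one_pow, mul_one]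
          calc ‖c (i+N)‖ ≤ C * (2:ℝ)⁻¹ ^ (i+N) := hbound _
            _ = (C * (2:ℝ)⁻¹ ^ N) * (2:ℝ)⁻¹ ^ i := by rw [pow_add]; ring
        have hgeo : Summable (fun i : ℕ => (C * (2:ℝ)⁻¹ ^ N) * (2:ℝ)⁻¹ ^ i) :=
          (summable_geometric_of_lt_one (by norm_num) (by norm_num)).mul_left _
        have hsummable2 : Summable (fun i : ℕ => ‖c (i+N) * coord w ^ (i+N)‖) :=
          Summable.of_nonneg_of_le (fun i => norm_nonneg _) hterm hgeo
        refine (norm_tsum_le_tsum_norm hsummable2).trans ?_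
        refine (Summable.tsum_le_tsum hterm hsummable2 hgeo).trans ?_
        rw [tsum_mul_left, tsum_geometric_of_lt_one (by norm_num) (by norm_num)]
        norm_num
    have htend := hS.tendsto_sum_nat
    have h0' : Filter.Tendsto (fun N : ℕ => C * (2:ℝ)⁻¹ ^ N * 2) Filter.atTop (nhds 0) := by
      have h1 : Filter.Tendsto (fun N : ℕ => (2:ℝ)⁻¹ ^ N) Filter.atTop (nhds 0) :=
        tendsto_pow_atTop_nhds_zero_of_lt_one (by norm_num) (by norm_num)
      have := (h1.const_mul C).mul_const 2
      simpa using this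
    have h2 : Filter.Tendsto (fun N => ∑ k ∈ Finset.range N, c k • efn (k:ℤ))
        Filter.atTop (nhds 0) :=
      tendsto_zero_iff_norm_tendsto_zero.mpr
        (squeeze_zero (fun N => norm_nonneg _) key h0')
    exact tendsto_nhds_unique htend h2
  intro N
  have h1 : HasSum (fun k : ℕ => ⟪efn (N:ℤ), c k • efn (k:ℤ)⟫) ⟪efn (N:ℤ), S⟫ :=
    HasSum.mapL (innerSL ℂ (efn (N:ℤ))) hS
  have h3 : (fun k : ℕ => ⟪efn (N:ℤ), c k • efn (k:ℤ)⟫)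
      = fun k : ℕ => if k = N then c N else 0 := by
    funext k
    rw [inner_smul_right, inner_efn_efn]
    by_cases h : (N:ℤ) = (k:ℤ)
    · have hkN : k = N := by exact_mod_cast h.symm
      subst hkN; simp
    · rw [if_neg h, mul_zero, if_neg (fun hh => h (by exact_mod_cast hh.symm))]
  rw [h3, hS0, inner_zero_right] at h1
  exact (h1.unique (hasSum_ite_eq N (c N))).symm

/-- Totality of the bounded elements of `K_u`. -/
lemma Ku_bounded_total (hu : IsInner u) {X : L2} (hX : X ∈ Ku u)
    (h : ∀ g : Ku u, MemLp ((g : L2) : Circ → ℂ) ⊤ m → ⟪(g : L2), X⟫ = 0) : X = 0 := by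
  have hneg : ∀ n : ℤ, n < 0 → coef X n = 0 := fun n hn =>
    coef_eq_zero_of_mem_H2 (Ku_le_H2 hX) hn
  have hser : ∀ lam : ℂ, ‖lam‖ < 1 → ⟪Gel lam, X⟫ = 0 := by
    intro lam hlam
    have hk : ⟪kel u hu lam, X⟫ = 0 :=
      h ⟨kel u hu lam, kel_mem_Ku hu hlam⟩ (kel_memTop hu hlam)
    rw [kel, inner_sub_left, inner_smul_left, RCLike.conj_conj,
      inner_Mu_Gel_of_Ku hu hX hlam, mul_zero, sub_zero] at hk
    exact hk
  have hcoefpos : ∀ N : ℕ, coef X (N:ℤ) = 0 := by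
    have hzero : ∀ w : Circ, HasSum
        (fun k : ℕ => ((2:ℂ)⁻¹ ^ k * coef X (k:ℤ)) * coord w ^ k) 0 := by
      intro w
      have hlamw : ‖(2:ℂ)⁻¹ * coord w‖ < 1 := by
        rw [norm_mul, norm_coord', mul_one]
        norm_num
      have hs := hasSum_inner_Gel hlamw X
      rw [hser _ hlamw] at hs
      have : (fun k : ℕ => ((2:ℂ)⁻¹ * coord w) ^ k * ⟪efn (k:ℤ), X⟫)
          = fun k : ℕ => ((2:ℂ)⁻¹ ^ k * coef X (k:ℤ)) * coord w ^ k := by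
        funext k
        rw [mul_pow, coef]
        ring
      rwa [this] at hs
    have := coeff_zero_of_series_zero (fun k => (2:ℂ)⁻¹ ^ k * coef X (k:ℤ)) ‖X‖
      (fun k => by
        rw [norm_mul, norm_pow]
        have h2 : ‖(2:ℂ)⁻¹‖ = (2:ℝ)⁻¹ := by norm_num
        rw [h2, mul_comm (‖X‖) _]
        exact mul_le_mul_of_nonneg_left (coef_norm_le _ _) (by positivity)) hzero
    intro N
    have hN := this N
    have h2 : ((2:ℂ)⁻¹ : ℂ) ^ N ≠ 0 := pow_ne_zero _ (by norm_num)
    exact (mul_eq_zero.mp hN).resolve_left h2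
  refine eq_zero_of_coef_eq_zero X fun n => ?_
  rcases lt_or_ge n 0 with hn | hn
  · exact hneg n hn
  · have : n = ((n.toNat : ℕ) : ℤ) := by omega
    rw [this]
    exact hcoefpos _

end withu
end TTO


open MeasureTheory Complex
open scoped Real ENNReal ComplexConjugate

noncomputable section
namespace TTO

local notation "⟪" x ", " y "⟫" => @inner ℂ _ _ x y

variable {u : Circ → ℂ}

lemma memℒp_conj {f : Circ → ℂ} {p : ℝ≥0∞} (hf : MemLp f p m) :
    MemLp (fun w => conj (f w)) p m := by
  refine ⟨RCLike.continuous_conj.comp_aestronglyMeasurable hf.1, ?_⟩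
  have : eLpNorm (fun w => conj (f w)) p m = eLpNorm f p m := by
    refine eLpNorm_congr_norm_ae (Filter.Eventually.of_forall fun w => ?_)
    rw [RCLike.norm_conj]
  rw [this]
  exact hf.2

/-- The adjoint of a TTO has the conjugate symbol. -/
lemma isTTO_adjoint (hu : IsInner u) {Φ : Circ → ℂ} (hΦ : MemLp Φ 2 m)
    {A : Ku u →L[ℂ] Ku u} (hA : IsTTO u Φ A) :
    IsTTO u (fun w => conj (Φ w)) (ContinuousLinearMap.adjoint A) := by
  intro f hf
  set Y : L2 := toLp2 (fun w => conj (Φ w) * ((f : L2) : Circ → ℂ) w) with hYdef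
  have hYmem : MemLp (fun w => conj (Φ w) * ((f : L2) : Circ → ℂ) w) 2 m :=
    memℒp2_mul_top (memℒp_conj hΦ) hf
  have hX : ((ContinuousLinearMap.adjoint A) f - Pu u Y : Ku u) = 0 := by
    have hXKu : ((((ContinuousLinearMap.adjoint A) f - Pu u Y : Ku u)) : L2) ∈ Ku u :=
      ((ContinuousLinearMap.adjoint A) f - Pu u Y : Ku u).2
    have h0 : ∀ g : Ku u, MemLp ((g : L2) : Circ → ℂ) ⊤ m →
        ⟪(g : L2), (((ContinuousLinearMap.adjoint A) f - Pu u Y : Ku u) : L2)⟫ = 0 := by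
      intro g hg
      have hmul : MemLp (fun w => Φ w * ((g : L2) : Circ → ℂ) w) 2 m :=
        memℒp2_mul_top hΦ hg
      have e1 : ⟪(g : L2), (((ContinuousLinearMap.adjoint A) f : Ku u) : L2)⟫
          = conj ⟪((f : Ku u) : L2), toLp2 (fun w => Φ w * ((g : L2) : Circ → ℂ) w)⟫ := by
        have h1 : ⟪(g : L2), (((ContinuousLinearMap.adjoint A) f : Ku u) : L2)⟫
            = ⟪g, (ContinuousLinearMap.adjoint A) f⟫ := (Submodule.coe_inner _ _ _).symm
        have h2 : ⟪g, (ContinuousLinearMap.adjoint A) f⟫ = conj ⟪(ContinuousLinearMap.adjoint A) f, g⟫ :=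
          (inner_conj_symm (𝕜 := ℂ) (E := Ku u) _ _).symm
        have h3 : ⟪(ContinuousLinearMap.adjoint A) f, g⟫ = ⟪f, A g⟫ :=
          ContinuousLinearMap.adjoint_inner_left A g f
        have h4 : A g = Pu u (toLp2 (fun w => Φ w * ((g : L2) : Circ → ℂ) w)) := hA g hg
        have h5 : ⟪f, A g⟫ = ⟪(f : L2), ((A g : Ku u) : L2)⟫ := Submodule.coe_inner _ _ _
        rw [h1, h2, h3, h5, h4]
        congr 1
        exact inner_Pu_right f _
      have e2 : ⟪(g : L2), ((Pu u Y : Ku u) : L2)⟫ = ⟪(g : L2), Y⟫ := inner_Pu_right g Y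
      have e3 : conj ⟪((f : Ku u) : L2), toLp2 (fun w => Φ w * ((g : L2) : Circ → ℂ) w)⟫
          = ⟪(g : L2), Y⟫ := by
        rw [inner_toLp2_right hmul, inner_toLp2_right hYmem, ← integral_conj]
        refine integral_congr_ae (Filter.Eventually.of_forall fun w => ?_)
        simp only [map_mul, RCLike.conj_conj]
        ring
      have hsub : (((ContinuousLinearMap.adjoint A) f - Pu u Y : Ku u) : L2)
          = (((ContinuousLinearMap.adjoint A) f : Ku u) : L2) - ((Pu u Y : Ku u) : L2) := rfl
      rw [hsub, inner_sub_right, e1, e3, e2, sub_self]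
    have := Ku_bounded_total hu hXKu h0
    exact Subtype.ext this
  have := sub_eq_zero.mp hX
  exact this

/-- `A_{u h} = 0` : multiples of `u` by `H²` functions are null symbols. -/
lemma Pu_Mu_mul_eq_zero (hu : IsInner u) {h : L2} (hh : h ∈ H2) (f : Ku u)
    (hf : MemLp ((f : L2) : Circ → ℂ) ⊤ m) :
    Pu u (toLp2 fun w => ((mulCLM u hu.memTop h : L2) : Circ → ℂ) w * ((f : L2) : Circ → ℂ) w)
      = 0 := by
  have hfH2 : toLp2 ((f : L2) : Circ → ℂ) ∈ H2 := by
    rw [toLp2_coe]; exact Ku_le_H2 f.2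
  have hprod : mulCLM ((f : L2) : Circ → ℂ) hf h ∈ H2 :=
    mulCLM_mem_H2 hf hfH2 hh
  refine Pu_uH2_eq_zero ?_
  refine mem_uH2_of_ae (mulCLM ((f : L2) : Circ → ℂ) hf h) hprod ?_
  have hq : MemLp (fun w => ((mulCLM u hu.memTop h : L2) : Circ → ℂ) w * ((f : L2) : Circ → ℂ) w) 2 m :=
    memℒp2_mul_top (Lp.memLp _) hf
  filter_upwards [toLp2_coeFn hq, coeFn_mulCLM hu.memTop h,
    coeFn_mulCLM hf h] with w e1 e2 e3
  rw [e1, e2, e3]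
  ring

/-- `A_{c·conj u} = 0` on `K_u`. -/
lemma Pu_conj_u_mul_eq_zero (hu : IsInner u) (f : Ku u) :
    Pu u (toLp2 fun w => conj (u w) * ((f : L2) : Circ → ℂ) w) = 0 := by
  have hmem : MemLp (fun w => conj (u w) * ((f : L2) : Circ → ℂ) w) 2 m :=
    memℒp2_top_mul (memℒp_conj hu.memTop) (Lp.memLp _)
  refine Pu_eq_zero ?_
  rw [Submodule.mem_orthogonal]
  intro y hy
  rw [inner_toLp2_right hmem]
  have key : ∫ w, conj ((y : Circ → ℂ) w) * (conj (u w) * ((f : L2) : Circ → ℂ) w) ∂m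
      = conj ⟪((f : L2)), (mulCLM u hu.memTop y : L2)⟫ := by
    rw [inner_L2_eq_integral, ← integral_conj]
    refine integral_congr_ae ?_
    filter_upwards [coeFn_mulCLM hu.memTop y] with w e1
    rw [e1]
    simp only [map_mul, RCLike.conj_conj]
    ring
  rw [key, inner_Ku_uH2 f.2 (mulCLM_mem_uH2 hu (Ku_le_H2 hy)), map_zero]

end TTO


open MeasureTheory Complex
open scoped Real ENNReal ComplexConjugate

noncomputable section
namespace TTO

local notation "⟪" x ", " y "⟫" => @inner ℂ _ _ x y

variable {u : Circ → ℂ}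

lemma fourier_mul' (a b : ℤ) (w : Circ) :
    (fourier a) w * (fourier b) w = (fourier (a+b) : C(Circ, ℂ)) w := (fourier_add).symm

lemma conj_coord_eq (w : Circ) : conj (coord w) = (fourier (-1 : ℤ) : C(Circ, ℂ)) w := by
  rw [fourier_neg]; rfl

lemma integrable2 {f : Circ → ℂ} (hf : MemLp f 2 m) : Integrable f m :=
  hf.integrable (by norm_num)

lemma integral_fourier (j : ℤ) :
    ∫ w, (fourier j) w ∂m = if j = 0 then 1 else 0 := by
  have h1 := coef_eq_integral (efn 0) (-j)
  have h2 : coef (efn 0) (-j) = if (-j : ℤ) = 0 then 1 else 0 := by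
    rw [coef]
    rw [inner_efn_efn]
  have h3 : ∫ w, (fourier (-(-j))) w * ((efn 0 : L2) : Circ → ℂ) w ∂m = ∫ w, (fourier j) w ∂m := by
    refine integral_congr_ae ?_
    filter_upwards [coe_efn 0] with w e1
    rw [e1]
    simp [fourier_zero]
  rw [h3] at h1
  rw [← h1, h2]
  by_cases h : j = 0
  · subst h; simp
  · rw [if_neg h, if_neg (by omega)]

section structure_lemmas
variable (φ : Ku u)

/-- The constant `d = conj(φ̂(0))`. -/
def dconst (φ : Ku u) : ℂ := conj (coef ((φ : L2)) 0)

lemma memCfun (hu : IsInner u) : MemLp (fun w => u w * conj (coord w * ((φ : L2) : Circ → ℂ) w)) 2 m := by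
  refine memℒp2_top_mul hu.memTop (memℒp_conj ?_)
  exact memℒp2_top_mul memℒp_top_coord (Lp.memLp _)

lemma memW2 (hu : IsInner u) : MemLp (fun w => u w * (conj (((φ : L2) : Circ → ℂ) w) - dconst φ)) 2 m := by
  refine memℒp2_top_mul hu.memTop ?_
  exact (memℒp_conj (Lp.memLp _)).sub (memLp_const _)

lemma efn_neg_mem_H2 {n : ℤ} (hn : 0 ≤ n) : efn n ∈ H2 := by
  have h2 : n = ((n.toNat : ℕ) : ℤ) := by omega
  rw [h2]; exact efn_mem_H2 _

/-- Orthogonality of `K_u` to conjugates: `⟪f', z⟫ = 0` for all `f' ∈ H²`, where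
`z = conj(z·φ)`. -/
lemma inner_H2_conj_coord_mul (f' : L2) (hf' : f' ∈ H2) :
    ⟪f', toLp2 (fun w => conj (coord w * ((φ : L2) : Circ → ℂ) w))⟫ = 0 := by
  have hmem : MemLp (fun w => conj (coord w * ((φ : L2) : Circ → ℂ) w)) 2 m :=
    memℒp_conj (memℒp2_top_mul memℒp_top_coord (Lp.memLp _))
  refine inner_eq_zero_of_gen ?_ f' hf'
  rintro s ⟨k, rfl⟩
  show coef (toLp2 fun w => conj (coord w * ((φ : L2) : Circ → ℂ) w)) k = 0
  have key : coef (toLp2 fun w => conj (coord w * ((φ : L2) : Circ → ℂ) w)) k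
      = conj (coef ((φ : L2)) (-((k:ℤ)+1))) := by
    rw [coef_toLp2 hmem, coef_eq_integral,
      show (-(-((k:ℤ)+1)) : ℤ) = (k:ℤ)+1 by ring, ← integral_conj]
    refine integral_congr_ae (Filter.Eventually.of_forall fun w => ?_)
    simp only [map_mul]
    rw [← fourier_neg, conj_coord_eq]
    have hm : (fourier (-1:ℤ)) w * (fourier (-(k:ℤ))) w = (fourier ((-1) + -(k:ℤ)) : C(Circ, ℂ)) w :=
      fourier_mul' _ _ w
    rw [show ((-1) + -(k:ℤ)) = -((k:ℤ)+1) by ring] at hm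
    linear_combination (conj ((((φ : L2)) : Circ → ℂ) w)) * hm
  rw [key, coef_eq_zero_of_mem_H2 (Ku_le_H2 φ.2) (by omega), map_zero]

lemma norm_fourier (j : ℤ) (w : Circ) : ‖(fourier j) w‖ = 1 := by
  simpa [fourier_apply] using Circle.norm_coe _

lemma memTop_fourier (j : ℤ) : MemLp (fun w => (fourier j) w) ⊤ m :=
  memLp_top_of_bound (map_continuous _).aestronglyMeasurable 1
    (Filter.Eventually.of_forall fun w => le_of_eq (norm_fourier j w))

/-- `⟪f', conj φ − d⟫ = 0` for all `f' ∈ H²`. -/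
lemma inner_H2_conj_sub_d (f' : L2) (hf' : f' ∈ H2) :
    ⟪f', toLp2 (fun w => conj (((φ : L2) : Circ → ℂ) w) - dconst φ)⟫ = 0 := by
  have hmem : MemLp (fun w => conj (((φ : L2) : Circ → ℂ) w) - dconst φ) 2 m :=
    (memℒp_conj (Lp.memLp _)).sub (memLp_const _)
  refine inner_eq_zero_of_gen ?_ f' hf'
  rintro s ⟨k, rfl⟩
  show coef (toLp2 fun w => conj (((φ : L2) : Circ → ℂ) w) - dconst φ) k = 0
  have hint1 : Integrable (fun w => (fourier (-(k:ℤ))) w * conj (((φ : L2) : Circ → ℂ) w)) m :=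
    integrable2 (memℒp2_top_mul (memTop_fourier _) (memℒp_conj (Lp.memLp _)))
  have hint2 : Integrable (fun w => (fourier (-(k:ℤ))) w * dconst φ) m :=
    integrable2 (memℒp2_mul_top (memℒp2_of_top (memTop_fourier _)) (memLp_const _))
  have hsplit : coef (toLp2 fun w => conj (((φ : L2) : Circ → ℂ) w) - dconst φ) k
      = (∫ w, (fourier (-(k:ℤ))) w * conj (((φ : L2) : Circ → ℂ) w) ∂m)
        - ∫ w, (fourier (-(k:ℤ))) w * dconst φ ∂m := by
    rw [coef_toLp2 hmem, ← integral_sub hint1 hint2]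
    refine integral_congr_ae (Filter.Eventually.of_forall fun w => ?_)
    ring
  have h1 : ∫ w, (fourier (-(k:ℤ))) w * conj (((φ : L2) : Circ → ℂ) w) ∂m
      = conj (coef ((φ : L2)) (-(k:ℤ))) := by
    rw [coef_eq_integral, show (-(-(k:ℤ)) : ℤ) = (k:ℤ) by ring, ← integral_conj]
    refine integral_congr_ae (Filter.Eventually.of_forall fun w => ?_)
    show (fourier (-(k:ℤ))) w * conj ((((φ : L2)) : Circ → ℂ) w)
      = conj ((fourier (k:ℤ)) w * (((φ : L2)) : Circ → ℂ) w)
    rw [map_mul, ← fourier_neg]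
  have h2 : ∫ w, (fourier (-(k:ℤ))) w * dconst φ ∂m
      = (if (-(k:ℤ)) = 0 then (1:ℂ) else 0) * dconst φ := by
    rw [← integral_fourier (-(k:ℤ))]
    rw [← integral_mul_const]
  rw [hsplit, h1, h2]
  by_cases hk : k = 0
  · subst hk
    simp [dconst]
  · rw [coef_eq_zero_of_mem_H2 (Ku_le_H2 φ.2) (by omega), map_zero,
      if_neg (by omega), zero_mul, sub_zero]

/-- `Cφ = u·conj(z φ)` belongs to `K_u`. -/
lemma Cfun_mem_Ku (hu : IsInner u) :
    toLp2 (fun w => u w * conj (coord w * ((φ : L2) : Circ → ℂ) w)) ∈ Ku u := by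
  constructor
  · refine mem_H2_of_coef _ fun n hn => ?_
    have key : coef (toLp2 fun w => u w * conj (coord w * ((φ : L2) : Circ → ℂ) w)) n
        = conj ⟪mulCLM u hu.memTop (efn (-(n+1))), ((φ : L2))⟫ := by
      rw [coef_toLp2 (memCfun φ hu), inner_L2_eq_integral, ← integral_conj]
      refine integral_congr_ae ?_
      filter_upwards [coeFn_mulCLM hu.memTop (efn (-(n+1))), coe_efn (-(n+1))] with w e1 e2
      rw [e1]
      show (fourier (-n)) w * (u w * conj (coord w * ((φ : L2) : Circ → ℂ) w))
        = conj (conj (u w * ((efn (-(n+1)) : L2) : Circ → ℂ) w) * ((φ : L2) : Circ → ℂ) w)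
      rw [e2]
      simp only [map_mul, RCLike.conj_conj]
      rw [conj_coord_eq]
      have hm : (fourier (-n:ℤ)) w * (fourier (-1:ℤ)) w = (fourier ((-n) + -1) : C(Circ, ℂ)) w :=
        fourier_mul' _ _ w
      rw [show ((-n) + (-1) : ℤ) = -(n+1) by ring] at hm
      linear_combination (u w * conj ((((φ : L2)) : Circ → ℂ) w)) * hm
    rw [key, inner_uH2_Ku φ.2 (mulCLM_mem_uH2 hu (efn_neg_mem_H2 (by omega))), map_zero]
  · refine (Submodule.mem_orthogonal _ _).mpr ?_
    intro q hq
    refine inner_eq_zero_of_gen ?_ q hq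
    rintro s ⟨f', hf', hs⟩
    have key : ⟪s, toLp2 (fun w => u w * conj (coord w * ((φ : L2) : Circ → ℂ) w))⟫
        = conj ⟪toLp2 (fun w => conj (coord w * ((φ : L2) : Circ → ℂ) w)), f'⟫ := by
      rw [inner_L2_eq_integral, inner_L2_eq_integral, ← integral_conj]
      refine integral_congr_ae ?_
      have hmemz : MemLp (fun w => conj (coord w * ((φ : L2) : Circ → ℂ) w)) 2 m :=
        memℒp_conj (memℒp2_top_mul memℒp_top_coord (Lp.memLp _))
      filter_upwards [hs, toLp2_coeFn (memCfun φ hu), toLp2_coeFn hmemz, hu.2.1] with w e1 e2 e3 e4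
      rw [e2, e1]
      show conj (u w * ((f' : L2) : Circ → ℂ) w) * (u w * conj (coord w * ((φ : L2) : Circ → ℂ) w))
        = conj (conj (((toLp2 (fun w => conj (coord w * ((φ : L2) : Circ → ℂ) w)) : L2) : Circ → ℂ) w)
            * ((f' : L2) : Circ → ℂ) w)
      rw [e3]
      simp only [map_mul, RCLike.conj_conj]
      have huu : conj (u w) * u w = 1 := by
        rw [← Complex.normSq_eq_conj_mul_self]
        norm_cast
        rw [show normSq (u w) = ‖u w‖^2 from Complex.normSq_eq_norm_sq _,
          show ‖u w‖ = ‖u w‖ from rfl, e4]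
        norm_num
      linear_combination (conj (((f' : L2) : Circ → ℂ) w) * conj (coord w)
        * conj ((((φ : L2)) : Circ → ℂ) w)) * huu
    rw [key, ← inner_conj_symm, inner_H2_conj_coord_mul φ f' hf', map_zero, map_zero]

/-- `u(conj φ − d)` belongs to `K_u`. -/
lemma W2_mem_Ku (hu : IsInner u) :
    toLp2 (fun w => u w * (conj (((φ : L2) : Circ → ℂ) w) - dconst φ)) ∈ Ku u := by
  constructor
  · refine mem_H2_of_coef _ fun n hn => ?_
    have hint1 : Integrable (fun w => (fourier (-n)) w * (u w * conj (((φ : L2) : Circ → ℂ) w))) m :=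
      integrable2 (memℒp2_top_mul (memTop_fourier _)
        (memℒp2_top_mul hu.memTop (memℒp_conj (Lp.memLp _))))
    have hint2 : Integrable (fun w => (fourier (-n)) w * (u w * dconst φ)) m :=
      integrable2 (memℒp2_top_mul (memTop_fourier _)
        (memℒp2_top_mul hu.memTop (memLp_const _)))
    have hsplit : coef (toLp2 fun w => u w * (conj (((φ : L2) : Circ → ℂ) w) - dconst φ)) n
        = (∫ w, (fourier (-n)) w * (u w * conj (((φ : L2) : Circ → ℂ) w)) ∂m)
          - ∫ w, (fourier (-n)) w * (u w * dconst φ) ∂m := by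
      rw [coef_toLp2 (memW2 φ hu), ← integral_sub hint1 hint2]
      refine integral_congr_ae (Filter.Eventually.of_forall fun w => ?_)
      show (fourier (-n)) w * (u w * (conj (((φ : L2) : Circ → ℂ) w) - dconst φ))
        = (fourier (-n)) w * (u w * conj (((φ : L2) : Circ → ℂ) w))
          - (fourier (-n)) w * (u w * dconst φ)
      ring
    have h1 : ∫ w, (fourier (-n)) w * (u w * conj (((φ : L2) : Circ → ℂ) w)) ∂m
        = conj ⟪mulCLM u hu.memTop (efn (-n)), ((φ : L2))⟫ := by
      rw [inner_L2_eq_integral, ← integral_conj]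
      refine integral_congr_ae ?_
      filter_upwards [coeFn_mulCLM hu.memTop (efn (-n)), coe_efn (-n)] with w e1 e2
      rw [e1]
      show (fourier (-n)) w * (u w * conj (((φ : L2) : Circ → ℂ) w))
        = conj (conj (u w * ((efn (-n) : L2) : Circ → ℂ) w) * ((φ : L2) : Circ → ℂ) w)
      rw [e2]
      simp only [map_mul, RCLike.conj_conj]
      ring
    have h2 : ∫ w, (fourier (-n)) w * (u w * dconst φ) ∂m
        = coef (toLp2 u) n * dconst φ := by
      rw [coef_toLp2 (memℒp2_of_top hu.memTop), ← integral_mul_const]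
      refine integral_congr_ae (Filter.Eventually.of_forall fun w => ?_)
      show (fourier (-n)) w * (u w * dconst φ) = (fourier (-n)) w * u w * dconst φ
      ring
    rw [hsplit, h1, h2,
      inner_uH2_Ku φ.2 (mulCLM_mem_uH2 hu (efn_neg_mem_H2 (by omega))), map_zero,
      coef_eq_zero_of_mem_H2 hu.2.2 hn, zero_mul, sub_zero]
  · refine (Submodule.mem_orthogonal _ _).mpr ?_
    intro q hq
    refine inner_eq_zero_of_gen ?_ q hq
    rintro s ⟨f', hf', hs⟩
    have key : ⟪s, toLp2 (fun w => u w * (conj (((φ : L2) : Circ → ℂ) w) - dconst φ))⟫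
        = conj ⟪toLp2 (fun w => conj (((φ : L2) : Circ → ℂ) w) - dconst φ), f'⟫ := by
      rw [inner_L2_eq_integral, inner_L2_eq_integral, ← integral_conj]
      refine integral_congr_ae ?_
      have hmemz : MemLp (fun w => conj (((φ : L2) : Circ → ℂ) w) - dconst φ) 2 m :=
        (memℒp_conj (Lp.memLp _)).sub (memLp_const _)
      filter_upwards [hs, toLp2_coeFn (memW2 φ hu), toLp2_coeFn hmemz, hu.2.1] with w e1 e2 e3 e4
      rw [e2, e1]
      show conj (u w * ((f' : L2) : Circ → ℂ) w)
          * (u w * (conj (((φ : L2) : Circ → ℂ) w) - dconst φ))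
        = conj (conj (((toLp2 (fun w => conj (((φ : L2) : Circ → ℂ) w) - dconst φ) : L2) : Circ → ℂ) w)
          * ((f' : L2) : Circ → ℂ) w)
      rw [e3]
      simp only [map_mul, map_sub, RCLike.conj_conj]
      have huu : conj (u w) * u w = 1 := by
        rw [← Complex.normSq_eq_conj_mul_self]
        norm_cast
        rw [show normSq (u w) = ‖u w‖^2 from Complex.normSq_eq_norm_sq _,
          show ‖u w‖ = ‖u w‖ from rfl, e4]
        norm_num
      linear_combination (conj (((f' : L2) : Circ → ℂ) w)
        * (conj ((((φ : L2)) : Circ → ℂ) w) - dconst φ)) * huu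
    rw [key, ← inner_conj_symm, inner_H2_conj_sub_d φ f' hf', map_zero, map_zero]

/-- `Cop` is concretely `u·conj(zφ)`. -/
lemma Cop_coe (hu : IsInner u) :
    ((Cop u φ : Ku u) : L2) = toLp2 (fun w => u w * conj (coord w * ((φ : L2) : Circ → ℂ) w)) := by
  rw [Cop, CfunL2]
  exact Pu_eq_self (Cfun_mem_Ku φ hu)

/-- `S(Cφ)` is concretely `u·(conj φ − d)`. -/
lemma Sop_Cop_coe (hu : IsInner u) :
    ((Sop u (Cop u φ) : Ku u) : L2)
      = toLp2 (fun w => u w * (conj (((φ : L2) : Circ → ℂ) w) - dconst φ)) := by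
  have hstep1 : mulCLM coord memℒp_top_coord ((Cop u φ : Ku u) : L2)
      = toLp2 (fun w => u w * conj (((φ : L2) : Circ → ℂ) w)) := by
    have hmem : MemLp (fun w => u w * conj (((φ : L2) : Circ → ℂ) w)) 2 m :=
      memℒp2_top_mul hu.memTop (memℒp_conj (Lp.memLp _))
    apply Lp.ext
    have h0 := coeFn_mulCLM memℒp_top_coord ((Cop u φ : Ku u) : L2)
    have h1 : (((Cop u φ : Ku u) : L2) : Circ → ℂ)
        =ᵐ[m] fun w => u w * conj (coord w * ((φ : L2) : Circ → ℂ) w) := by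
      rw [Cop_coe φ hu]
      exact toLp2_coeFn (memCfun φ hu)
    filter_upwards [h0, h1, toLp2_coeFn hmem] with w e0 e1 e2
    rw [e0, e1, e2]
    simp only [map_mul]
    have hcc : coord w * conj (coord w) = 1 := coord_mul_conj w
    linear_combination (u w * conj ((((φ : L2)) : Circ → ℂ) w)) * hcc
  have hstep2 : toLp2 (fun w => u w * conj (((φ : L2) : Circ → ℂ) w))
      = toLp2 (fun w => u w * (conj (((φ : L2) : Circ → ℂ) w) - dconst φ))
        + dconst φ • toLp2 u := by
    have hm1 := memW2 φ hu
    have hm2 : MemLp (fun w => dconst φ * u w) 2 m :=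
      (memℒp2_of_top hu.memTop).const_mul _
    rw [← toLp2_smul (dconst φ) (memℒp2_of_top hu.memTop), ← toLp2_add hm1 hm2]
    refine toLp2_congr (memℒp2_top_mul hu.memTop (memℒp_conj (Lp.memLp _))) ?_
    refine Filter.Eventually.of_forall fun w => ?_
    show u w * conj (((φ : L2) : Circ → ℂ) w)
      = u w * (conj (((φ : L2) : Circ → ℂ) w) - dconst φ) + dconst φ * u w
    ring
  have : Sop u (Cop u φ) = Pu u (toLp2 (fun w => u w * conj (((φ : L2) : Circ → ℂ) w))) := by
    rw [Sop]
    show Pu u (mulCLM coord memℒp_top_coord ((Cop u φ : Ku u) : L2)) = _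
    rw [hstep1]
  rw [this, hstep2, map_add, (Pu u).map_smul]
  rw [Pu_uH2_eq_zero (toLp2_u_mem_uH2 hu), smul_zero, add_zero]
  exact Pu_eq_self (W2_mem_Ku φ hu)

end structure_lemmas
end TTO


open MeasureTheory Complex
open scoped Real ENNReal ComplexConjugate

noncomputable section
namespace TTO

local notation "⟪" x ", " y "⟫" => @inner ℂ _ _ x y

variable {u : Circ → ℂ}

lemma toLp2_congr' {f g : Circ → ℂ} (h : f =ᵐ[m] g) : toLp2 f = toLp2 g := by
  by_cases hf : MemLp f 2 m
  · exact toLp2_congr hf h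
  · have hg : ¬ MemLp g 2 m := fun hg => hf (hg.ae_eq h.symm)
    rw [toLp2, toLp2, dif_neg hf, dif_neg hg]

lemma isTTO_congr {Φ Ψ : Circ → ℂ} (h : Φ =ᵐ[m] Ψ) {A : Ku u →L[ℂ] Ku u}
    (hA : IsTTO u Φ A) : IsTTO u Ψ A := by
  intro f hf
  rw [hA f hf]
  congr 1
  refine toLp2_congr' ?_
  filter_upwards [h] with w hw
  rw [hw]

lemma memℒp_typeSymbol (φ : Ku u) (α c : ℂ) : MemLp (typeSymbol u α φ c) 2 m := by
  have h1 : MemLp (fun w => ((φ : L2) : Circ → ℂ) w) 2 m := Lp.memLp _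
  have h2 : MemLp (fun w => α * conj ((((Sop u (Cop u φ) : Ku u) : L2) : Circ → ℂ) w)) 2 m :=
    (memℒp_conj (Lp.memLp _)).const_mul α
  have h3 : MemLp (fun _ : Circ => c) 2 m := memLp_const c
  exact ((h1.add h2).add h3).ae_eq (Filter.Eventually.of_forall fun w => rfl)

lemma u_unimod (hu : IsInner u) : ∀ᵐ w ∂m, conj (u w) * u w = 1 := by
  filter_upwards [hu.2.1] with w hw
  rw [← Complex.normSq_eq_conj_mul_self]
  norm_cast
  rw [show normSq (u w) = ‖u w‖^2 from Complex.normSq_eq_norm_sq _,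
    show ‖u w‖ = ‖u w‖ from rfl, hw]
  norm_num

lemma toLp2_const (c : ℂ) : toLp2 (fun _ : Circ => c) = c • efn 0 := by
  rw [← toLp2_coe (efn 0), ← toLp2_smul c (Lp.memLp _)]
  refine toLp2_congr' ?_
  filter_upwards [coe_efn 0] with w hw
  rw [hw]
  simp [fourier_zero]

lemma memTop_conj_u (hu : IsInner u) : MemLp (fun w => conj (u w)) ⊤ m :=
  memℒp_conj hu.memTop

lemma inner_Mu_swap (hu : IsInner u) (x y : L2) :
    ⟪mulCLM u hu.memTop x, y⟫ = ⟪x, mulCLM (fun w => conj (u w)) (memTop_conj_u hu) y⟫ := by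
  rw [inner_L2_eq_integral, inner_L2_eq_integral]
  refine integral_congr_ae ?_
  filter_upwards [coeFn_mulCLM hu.memTop x, coeFn_mulCLM (memTop_conj_u hu) y] with w e1 e2
  rw [e1, e2]
  simp only [map_mul]
  ring

/-- Case `∞ → 0`. -/
lemma typeInf_adjoint (hu : IsInner u) {A : Ku u →L[ℂ] Ku u} (h : IsTypeInf u A) :
    IsTypeC u 0 (ContinuousLinearMap.adjoint A) := by
  obtain ⟨ψ, hψ2, hψH2, hTTO⟩ := h
  have hadj0 : IsTTO u (fun w => conj (conj (ψ w))) (ContinuousLinearMap.adjoint A) :=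
    isTTO_adjoint hu (memℒp_conj hψ2) hTTO
  have hadj : IsTTO u ψ (ContinuousLinearMap.adjoint A) :=
    isTTO_congr (Filter.Eventually.of_forall fun w => RCLike.conj_conj (ψ w)) hadj0
  set Y : L2 := toLp2 ψ with hY
  set Mubar := mulCLM (fun w => conj (u w)) (memTop_conj_u hu) with hMubar
  set hEl : H2 := H2.orthogonalProjectionOnto (Mubar Y) with hhEl
  set φ0L2 : L2 := Y - mulCLM u hu.memTop (hEl : L2) with hφ0
  have hφ0Ku : φ0L2 ∈ Ku u := by
    constructor
    · exact Submodule.sub_mem _ hψH2 (mulCLM_mem_H2 hu.memTop hu.2.2 hEl.2)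
    · refine (Submodule.mem_orthogonal _ _).mpr ?_
      intro q hq
      refine inner_eq_zero_of_gen ?_ q hq
      rintro s ⟨f', hf', hs⟩
      have hsMu : s = mulCLM u hu.memTop f' := by
        apply Lp.ext
        exact hs.trans (coeFn_mulCLM hu.memTop f').symm
      rw [hsMu, hφ0, inner_sub_right, inner_Mu_Mu hu, inner_Mu_swap hu]
      rw [← hMubar]
      have := H2.starProjection_inner_eq_zero (Mubar Y) f' hf'
      rw [Submodule.starProjection_apply] at this
      have h2 : ⟪f', Mubar Y - ((hEl : H2) : L2)⟫ = 0 := by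
        rw [← inner_conj_symm]
        rw [hhEl]
        rw [this, map_zero]
      rw [inner_sub_right] at h2
      linear_combination h2
  refine ⟨⟨φ0L2, hφ0Ku⟩, 0, ?_⟩
  intro f hf
  rw [hadj f hf]
  have hmem1 : MemLp (fun w => (φ0L2 : Circ → ℂ) w * ((f : L2) : Circ → ℂ) w) 2 m :=
    memℒp2_mul_top (Lp.memLp _) hf
  have hmem2 : MemLp (fun w =>
      ((mulCLM u hu.memTop (hEl : L2) : L2) : Circ → ℂ) w * ((f : L2) : Circ → ℂ) w) 2 m :=
    memℒp2_mul_top (Lp.memLp _) hf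
  have hstep : toLp2 (fun w => ψ w * ((f : L2) : Circ → ℂ) w)
      = toLp2 (fun w => (φ0L2 : Circ → ℂ) w * ((f : L2) : Circ → ℂ) w)
        + toLp2 (fun w =>
            ((mulCLM u hu.memTop (hEl : L2) : L2) : Circ → ℂ) w * ((f : L2) : Circ → ℂ) w) := by
    rw [← toLp2_add hmem1 hmem2]
    refine toLp2_congr' ?_
    have hYsum : Y = φ0L2 + mulCLM u hu.memTop (hEl : L2) := by rw [hφ0]; abel
    have hψae : ψ =ᵐ[m] fun w => (φ0L2 : Circ → ℂ) w
        + ((mulCLM u hu.memTop (hEl : L2) : L2) : Circ → ℂ) w := by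
      have h1 : (Y : Circ → ℂ) =ᵐ[m] ψ := toLp2_coeFn hψ2
      have h2 := Lp.coeFn_add φ0L2 (mulCLM u hu.memTop (hEl : L2))
      rw [← hYsum] at h2
      filter_upwards [h1, h2] with w e1 e2
      rw [← e1, e2]; rfl
    filter_upwards [hψae] with w e1
    show ψ w * ((f : L2) : Circ → ℂ) w = _
    rw [e1]
    show ((φ0L2 : Circ → ℂ) w
        + ((mulCLM u hu.memTop (hEl : L2) : L2) : Circ → ℂ) w) * ((f : L2) : Circ → ℂ) w = _
    ring
  rw [hstep, map_add, Pu_Mu_mul_eq_zero hu hEl.2 f hf, add_zero]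
  congr 1
  refine toLp2_congr' (Filter.Eventually.of_forall fun w => ?_)
  show (φ0L2 : Circ → ℂ) w * ((f : L2) : Circ → ℂ) w
    = ((φ0L2 : Circ → ℂ) w
        + 0 * conj ((((Sop u (Cop u ⟨φ0L2, hφ0Ku⟩) : Ku u) : L2) : Circ → ℂ) w) + 0)
      * ((f : L2) : Circ → ℂ) w
  ring

/-- Case `0 → ∞`. -/
lemma typeC0_adjoint (hu : IsInner u) {A : Ku u →L[ℂ] Ku u} (h : IsTypeC u 0 A) :
    IsTypeInf u (ContinuousLinearMap.adjoint A) := by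
  obtain ⟨φ, c, hTTO⟩ := h
  refine ⟨fun w => ((φ : L2) : Circ → ℂ) w + c, ?_, ?_, ?_⟩
  · exact (Lp.memLp (φ : L2)).add (memLp_const c)
  · have heq : toLp2 (fun w => ((φ : L2) : Circ → ℂ) w + c)
        = (φ : L2) + c • efn 0 := by
      rw [toLp2_add (Lp.memLp _) (memLp_const c), toLp2_coe, toLp2_const]
    rw [heq]
    exact Submodule.add_mem _ (Ku_le_H2 φ.2) (Submodule.smul_mem _ _ (efn_mem_H2 0))
  · have hadj : IsTTO u (fun w => conj (typeSymbol u 0 φ c w)) (ContinuousLinearMap.adjoint A) :=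
      isTTO_adjoint hu (memℒp_typeSymbol φ 0 c) hTTO
    refine isTTO_congr ?_ hadj
    refine Filter.Eventually.of_forall fun w => ?_
    show conj (((φ : L2) : Circ → ℂ) w
        + 0 * conj ((((Sop u (Cop u φ) : Ku u) : L2) : Circ → ℂ) w) + c)
      = conj (((φ : L2) : Circ → ℂ) w + c)
    congr 1
    ring

/-- Case `α → 1/conj(α)`, `α ≠ 0`. -/
lemma typeCalpha_adjoint (hu : IsInner u) {A : Ku u →L[ℂ] Ku u} {α : ℂ} (hα : α ≠ 0)
    (h : IsTypeC u α A) : IsTypeC u (conj α)⁻¹ (ContinuousLinearMap.adjoint A) := by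
  obtain ⟨φ, c, hTTO⟩ := h
  set β : ℂ := (conj α)⁻¹ with hβdef
  have hconjα : conj α ≠ 0 := by
    intro hc
    apply hα
    have := congrArg conj hc
    rwa [RCLike.conj_conj, map_zero] at this
  have hβ : β * conj α = 1 := by
    rw [hβdef]
    field_simp
  set φ' : Ku u := conj α • Sop u (Cop u φ) with hφ'def
  set d : ℂ := dconst φ with hd
  set d' : ℂ := dconst φ' with hd'
  set c' : ℂ := conj c + d with hc'
  set μ : ℂ := β * conj d' with hμ
  refine ⟨φ', c', ?_⟩
  have hadj : IsTTO u (fun w => conj (typeSymbol u α φ c w)) (ContinuousLinearMap.adjoint A) :=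
    isTTO_adjoint hu (memℒp_typeSymbol φ α c) hTTO
  have hae : (fun w => conj (typeSymbol u α φ c w))
      =ᵐ[m] fun w => typeSymbol u β φ' c' w + μ * conj (u w) := by
    have hSrep : ((((Sop u (Cop u φ)) : Ku u) : L2) : Circ → ℂ)
        =ᵐ[m] fun w => u w * (conj (((φ : L2) : Circ → ℂ) w) - d) := by
      rw [Sop_Cop_coe φ hu]
      exact toLp2_coeFn (memW2 φ hu)
    have hφ'rep : (((φ' : Ku u) : L2) : Circ → ℂ)
        =ᵐ[m] fun w => conj α * ((((Sop u (Cop u φ) : Ku u) : L2) : Circ → ℂ) w) := by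
      have hcoe : ((φ' : Ku u) : L2) = conj α • (((Sop u (Cop u φ)) : Ku u) : L2) := by
        rw [hφ'def]; rfl
      rw [hcoe]
      filter_upwards [Lp.coeFn_smul (conj α) ((((Sop u (Cop u φ)) : Ku u) : L2))] with w e1
      rw [e1]; rfl
    have hS'rep : ((((Sop u (Cop u φ')) : Ku u) : L2) : Circ → ℂ)
        =ᵐ[m] fun w => u w * (conj (((φ' : L2) : Circ → ℂ) w) - d') := by
      rw [Sop_Cop_coe φ' hu]
      exact toLp2_coeFn (memW2 φ' hu)
    filter_upwards [hSrep, hφ'rep, hS'rep, u_unimod hu] with w e1 e2 e3 e4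
    show conj (((φ : L2) : Circ → ℂ) w
        + α * conj ((((Sop u (Cop u φ) : Ku u) : L2) : Circ → ℂ) w) + c)
      = (((φ' : L2) : Circ → ℂ) w
          + β * conj ((((Sop u (Cop u φ') : Ku u) : L2) : Circ → ℂ) w) + c')
        + μ * conj (u w)
    rw [e3, e2, e1, hc', hμ]
    simp only [map_add, map_mul, map_sub, RCLike.conj_conj]
    linear_combination (-((conj (((φ : L2) : Circ → ℂ) w) - d) * (β * conj α))) * e4
      - (conj (((φ : L2) : Circ → ℂ) w) - d) * hβ
  have hadj2 : IsTTO u (fun w => typeSymbol u β φ' c' w + μ * conj (u w))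
      (ContinuousLinearMap.adjoint A) := isTTO_congr hae hadj
  intro f hf
  rw [hadj2 f hf]
  have hmem1 : MemLp (fun w => typeSymbol u β φ' c' w * ((f : L2) : Circ → ℂ) w) 2 m :=
    memℒp2_mul_top (memℒp_typeSymbol φ' β c') hf
  have hmemcu : MemLp (fun w => conj (u w) * ((f : L2) : Circ → ℂ) w) 2 m :=
    memℒp2_top_mul (memTop_conj_u hu) (Lp.memLp _)
  have hmem2 : MemLp (fun w => (μ * conj (u w)) * ((f : L2) : Circ → ℂ) w) 2 m := by
    refine (hmemcu.const_mul μ).ae_eq (Filter.Eventually.of_forall fun w => ?_)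
    show μ * (conj (u w) * ((f : L2) : Circ → ℂ) w) = _
    ring
  have hsplit : toLp2 (fun w => (typeSymbol u β φ' c' w + μ * conj (u w)) * ((f : L2) : Circ → ℂ) w)
      = toLp2 (fun w => typeSymbol u β φ' c' w * ((f : L2) : Circ → ℂ) w)
        + toLp2 (fun w => (μ * conj (u w)) * ((f : L2) : Circ → ℂ) w) := by
    rw [← toLp2_add hmem1 hmem2]
    refine toLp2_congr' (Filter.Eventually.of_forall fun w => ?_)
    show (typeSymbol u β φ' c' w + μ * conj (u w)) * ((f : L2) : Circ → ℂ) w = _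
    ring
  have hzero : Pu u (toLp2 (fun w => (μ * conj (u w)) * ((f : L2) : Circ → ℂ) w)) = 0 := by
    have heq : toLp2 (fun w => (μ * conj (u w)) * ((f : L2) : Circ → ℂ) w)
        = μ • toLp2 (fun w => conj (u w) * ((f : L2) : Circ → ℂ) w) := by
      rw [← toLp2_smul μ hmemcu]
      refine toLp2_congr' (Filter.Eventually.of_forall fun w => ?_)
      show (μ * conj (u w)) * ((f : L2) : Circ → ℂ) w = μ * (conj (u w) * ((f : L2) : Circ → ℂ) w)
      ring
    rw [heq, (Pu u).map_smul, Pu_conj_u_mul_eq_zero hu f, smul_zero]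
  rw [hsplit, map_add, hzero, add_zero]

/-- Forward direction. -/
lemma forward_type (hu : IsInner u) {A : Ku u →L[ℂ] Ku u} (x : Option ℂ)
    (h : IsTypeS u A x) : IsTypeS u (ContinuousLinearMap.adjoint A) (sphereInvConj x) := by
  match x with
  | none =>
    show IsTypeS u _ (some 0)
    exact typeInf_adjoint hu h
  | some α =>
    by_cases hα : α = 0
    · subst hα
      show IsTypeS u _ (sphereInvConj (some 0))
      rw [show sphereInvConj (some 0) = none from by simp [sphereInvConj]]
      exact typeC0_adjoint hu h
    · rw [show sphereInvConj (some α) = some ((conj α)⁻¹) from by simp [sphereInvConj, hα]]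
      exact typeCalpha_adjoint hu hα h

lemma sphereInvConj_invol (x : Option ℂ) : sphereInvConj (sphereInvConj x) = x := by
  match x with
  | none => simp [sphereInvConj]
  | some α =>
    by_cases hα : α = 0
    · subst hα; simp [sphereInvConj]
    · have hconjα : conj α ≠ 0 := by
        intro hc
        apply hα
        have := congrArg conj hc
        rwa [RCLike.conj_conj, map_zero] at this
      have hinv : (conj α)⁻¹ ≠ 0 := inv_ne_zero hconjα
      simp only [sphereInvConj, if_neg hα, if_neg hinv]
      rw [map_inv₀, RCLike.conj_conj, inv_inv]

end TTO


/-- An operator in `𝒯(u)` is of type `α ∈ ℂ*` (the Riemann sphere,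
encoded as `Option ℂ` with `none = ∞`) if and only if its adjoint is of type
`conj(α)⁻¹`, with the conventions `0⁻¹ = ∞`, `∞⁻¹ = 0` (and `conj ∞ = ∞`). -/
theorem TTO.type_adjoint_duality
    (u : Circ → ℂ) (hu : IsInner u) (hnc : Nonconst u)
    (A : Ku u →L[ℂ] Ku u) (hA : MemTTOs u A) (x : Option ℂ) :
    IsTypeS u A x ↔ IsTypeS u (ContinuousLinearMap.adjoint A) (sphereInvConj x) := by
  constructor
  · exact forward_type hu x
  · intro h
    have h2 := forward_type hu (sphereInvConj x) h
    rwa [ContinuousLinearMap.adjoint_adjoint, sphereInvConj_invol] at h2
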